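/- arXiv:2504.11461 — 4 statements merged into one kernel-verified Lean document; each statement's English description precedes it below -/
import Mathlib

section
/- Pappus' theorem in the real affine plane: let A, B, C be three distinct collinear points in ℝ² and A', B', C' three distinct collinear points in ℝ², lying on two distinct lines ℓ and ℓ' respectively, with none of the six points lying on both lines. Suppose P is a point collinear with both {A, B'} and {A', B}, Q is a point collinear with both {B, C'} and {B', C}, and R is a point collinear with both {A, C'} and {A', C}, where in each case the two cross lines involved are distinct (so each of P, Q, R is the unique intersection point of its pair of cross lines). Then P, Q, R are collinear. -/
abbrev E2 := EuclideanSpace ℝ (Fin 2)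

lemma E2_ext {X Y : E2} (h0 : X 0 = Y 0) (h1 : X 1 = Y 1) : X = Y := by
  ext i
  fin_cases i
  · exact h0
  · exact h1

noncomputable def det3 (X Y Z : E2) : ℝ :=
  (Y 0 - X 0) * (Z 1 - X 1) - (Y 1 - X 1) * (Z 0 - X 0)

lemma det3_eq_zero_of_collinear {X Y Z : E2} (h : Collinear ℝ ({X, Y, Z} : Set E2)) :
    det3 X Y Z = 0 := by
  rw [collinear_iff_of_mem (Set.mem_insert X _)] at h
  obtain ⟨v, hv⟩ := h
  obtain ⟨r, hr⟩ := hv Y (by simp)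
  obtain ⟨u, hu⟩ := hv Z (by simp)
  have hr0 : Y 0 = r * v 0 + X 0 := by rw [hr]; rfl
  have hr1 : Y 1 = r * v 1 + X 1 := by rw [hr]; rfl
  have hu0 : Z 0 = u * v 0 + X 0 := by rw [hu]; rfl
  have hu1 : Z 1 = u * v 1 + X 1 := by rw [hu]; rfl
  simp only [det3, hr0, hr1, hu0, hu1]
  ring

lemma collinear_of_det3_eq_zero {X Y Z : E2} (h : det3 X Y Z = 0) :
    Collinear ℝ ({X, Y, Z} : Set E2) := by
  by_cases hXY : Y = X
  · subst hXY
    rw [Set.insert_idem]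
    exact collinear_pair ℝ _ _
  · rw [collinear_iff_of_mem (Set.mem_insert X _)]
    refine ⟨Y - X, ?_⟩
    intro p hp
    simp only [Set.mem_insert_iff, Set.mem_singleton_iff] at hp
    have happ : ∀ (c : ℝ) (j : Fin 2), ((c • (Y - X) +ᵥ X) : E2) j = c * (Y j - X j) + X j :=
      fun c j => rfl
    rcases hp with rfl | rfl | hp
    · exact ⟨0, by apply E2_ext <;> rw [happ] <;> ring⟩
    · exact ⟨1, by apply E2_ext <;> rw [happ] <;> ring⟩
    · subst hp
      have hne : Y 0 - X 0 ≠ 0 ∨ Y 1 - X 1 ≠ 0 := by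
        by_contra hc
        push_neg at hc
        exact hXY (E2_ext (by linarith [hc.1]) (by linarith [hc.2]))
      simp only [det3] at h
      rcases hne with h0 | h0
      · refine ⟨(p 0 - X 0) / (Y 0 - X 0), ?_⟩
        apply E2_ext <;> rw [happ] <;> field_simp <;> nlinarith [h]
      · refine ⟨(p 1 - X 1) / (Y 1 - X 1), ?_⟩
        apply E2_ext <;> rw [happ] <;> field_simp <;> nlinarith [h]

lemma cross_trans {v1 v2 u1 u2 w1 w2 : ℝ} (hv : v1 ≠ 0 ∨ v2 ≠ 0)
    (h1 : u1 * v2 - u2 * v1 = 0) (h2 : w1 * v2 - w2 * v1 = 0) :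
    u1 * w2 - u2 * w1 = 0 := by
  rcases hv with h | h
  · have h3 : (u1 * w2 - u2 * w1) * v1 = 0 := by linear_combination w1 * h1 - u1 * h2
    rcases mul_eq_zero.mp h3 with h' | h'
    · exact h'
    · exact absurd h' h
  · have h3 : (u1 * w2 - u2 * w1) * v2 = 0 := by linear_combination w2 * h1 - u2 * h2
    rcases mul_eq_zero.mp h3 with h' | h'
    · exact h'
    · exact absurd h' h

lemma cross_ne_of_spans_ne {X Y X' Y' Z : E2} (hXY : X ≠ Y) (hX'Y' : X' ≠ Y')
    (h1 : Collinear ℝ ({X, Y, Z} : Set E2)) (h2 : Collinear ℝ ({X', Y', Z} : Set E2))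
    (hd : affineSpan ℝ ({X, Y} : Set E2) ≠ affineSpan ℝ ({X', Y'} : Set E2)) :
    (Y 0 - X 0) * (Y' 1 - X' 1) - (Y 1 - X 1) * (Y' 0 - X' 0) ≠ 0 := by
  intro hD
  have he1 := det3_eq_zero_of_collinear h1
  have he2 := det3_eq_zero_of_collinear h2
  simp only [det3] at he1 he2
  have hv : Y' 0 - X' 0 ≠ 0 ∨ Y' 1 - X' 1 ≠ 0 := by
    by_contra hc
    push_neg at hc
    exact hX'Y' (E2_ext (by linarith [hc.1]) (by linarith [hc.2])).symm
  have hc1 : (Y 0 - X 0) * (X' 1 - Z 1) - (Y 1 - X 1) * (X' 0 - Z 0) = 0 :=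
    cross_trans hv (by linear_combination hD) (by linear_combination he2)
  have hXX' : det3 X Y X' = 0 := by simp only [det3]; linear_combination hc1 + he1
  have hYY' : det3 X Y Y' = 0 := by
    simp only [det3]; linear_combination hD + hc1 + he1
  have hmX' : X' ∈ affineSpan ℝ ({X, Y} : Set E2) :=
    (collinear_of_det3_eq_zero hXX').mem_affineSpan_of_mem_of_ne (by simp) (by simp)
      (by simp) hXY
  have hmY' : Y' ∈ affineSpan ℝ ({X, Y} : Set E2) :=
    (collinear_of_det3_eq_zero hYY').mem_affineSpan_of_mem_of_ne (by simp) (by simp)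
      (by simp) hXY
  have hcol4 := collinear_insert_insert_of_mem_affineSpan_pair hmX' hmY'
  have hmX : X ∈ affineSpan ℝ ({X', Y'} : Set E2) :=
    hcol4.mem_affineSpan_of_mem_of_ne (by simp) (by simp) (by simp) hX'Y'
  have hmY : Y ∈ affineSpan ℝ ({X', Y'} : Set E2) :=
    hcol4.mem_affineSpan_of_mem_of_ne (by simp) (by simp) (by simp) hX'Y'
  apply hd
  apply le_antisymm
  · exact affineSpan_le.2 (Set.insert_subset_iff.2 ⟨hmX, Set.singleton_subset_iff.2 hmY⟩)
  · exact affineSpan_le.2 (Set.insert_subset_iff.2 ⟨hmX', Set.singleton_subset_iff.2 hmY'⟩)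

lemma cancel_helper (K L u v w z : ℝ) (hK : K ≠ 0) (hL : L ≠ 0)
    (h : K * u * (L * v) - K * w * (L * z) = 0) : u * v - w * z = 0 := by
  have h2 : (K * L) * (u * v - w * z) = 0 := by linear_combination h
  rcases mul_eq_zero.mp h2 with h' | h'
  · exact absurd h' (mul_ne_zero hK hL)
  · exact h'

set_option maxHeartbeats 1000000 in
lemma pappus_coords (b1 b2 x1 x2 y1 y2 c1 c2 d1 d2 p1 p2 q1 q2 r1 r2 : ℝ)
    (hABC : b1 * c2 - b2 * c1 = 0)
    (hXYZ : (y1 - x1) * (d2 - x2) - (y2 - x2) * (d1 - x1) = 0)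
    (e1 : y1 * p2 - y2 * p1 = 0)
    (e2 : (b1 - x1) * (p2 - x2) - (b2 - x2) * (p1 - x1) = 0)
    (e3 : (d1 - b1) * (q2 - b2) - (d2 - b2) * (q1 - b1) = 0)
    (e4 : (c1 - y1) * (q2 - y2) - (c2 - y2) * (q1 - y1) = 0)
    (e5 : d1 * r2 - d2 * r1 = 0)
    (e6 : (c1 - x1) * (r2 - x2) - (c2 - x2) * (r1 - x1) = 0)
    (hdP : (-x2*y1 + x1*y2 + b2*y1 - b1*y2) ≠ 0)
    (hdQ : (-b2*y1 + b1*y2 - d1*y2 + d2*y1 + c1*b2 - c1*d2 - c2*b1 + c2*d1) ≠ 0)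
    (hdR : (-d1*x2 + d2*x1 - c1*d2 + c2*d1) ≠ 0) :
    (q1 - p1) * (r2 - p2) - (q2 - p2) * (r1 - p1) = 0 := by
  have hp1 : (-x2*y1 + x1*y2 + b2*y1 - b1*y2) * p1 = (b2*x1*y1 - b1*x2*y1) := by linear_combination (b1-x1)*e1 - y1*e2
  have hp2 : (-x2*y1 + x1*y2 + b2*y1 - b1*y2) * p2 = (b2*x1*y2 - b1*x2*y2) := by linear_combination (b2-x2)*e1 - y2*e2
  have hq1 : (-b2*y1 + b1*y2 - d1*y2 + d2*y1 + c1*b2 - c1*d2 - c2*b1 + c2*d1) * q1 = (-d1*b2*y1 + d2*b1*y1 + c1*b1*y2 - c1*d1*y2 + c1*d1*b2 - c1*d2*b1 - c2*b1*y1 + c2*d1*y1) := by linear_combination (c1-y1)*e3 - (d1-b1)*e4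
  have hq2 : (-b2*y1 + b1*y2 - d1*y2 + d2*y1 + c1*b2 - c1*d2 - c2*b1 + c2*d1) * q2 = (-d1*b2*y2 + d2*b1*y2 + c1*b2*y2 - c1*d2*y2 - c2*b2*y1 + c2*d1*b2 + c2*d2*y1 - c2*d2*b1) := by linear_combination (c2-y2)*e3 - (d2-b2)*e4
  have hr1 : (-d1*x2 + d2*x1 - c1*d2 + c2*d1) * r1 = (-c1*d1*x2 + c2*d1*x1) := by linear_combination (c1-x1)*e5 - d1*e6
  have hr2 : (-d1*x2 + d2*x1 - c1*d2 + c2*d1) * r2 = (-c1*d2*x2 + c2*d2*x1) := by linear_combination (c2-x2)*e5 - d2*e6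
  have hf1 : (-b2*y1 + b1*y2 - d1*y2 + d2*y1 + c1*b2 - c1*d2 - c2*b1 + c2*d1) * (-x2*y1 + x1*y2 + b2*y1 - b1*y2) * (q1 - p1) = (b2*b2*x1*y1*y1 - b1*b2*x2*y1*y1 - b1*b2*x1*y1*y2 + b1*b1*x2*y1*y2 + d1*b2*x2*y1*y1 - d1*b2*b2*y1*y1 - d1*b1*x2*y1*y2 + d1*b1*b2*y1*y2 - d2*b2*x1*y1*y1 + d2*b1*x1*y1*y2 + d2*b1*b2*y1*y1 - d2*b1*b1*y1*y2 - c1*b2*b2*x1*y1 - c1*b1*x2*y1*y2 + c1*b1*x1*y2*y2 + c1*b1*b2*y1*y2 + c1*b1*b2*x2*y1 - c1*b1*b1*y2*y2 + c1*d1*x2*y1*y2 - c1*d1*x1*y2*y2 - c1*d1*b2*y1*y2 - c1*d1*b2*x2*y1 + c1*d1*b2*x1*y2 + c1*d1*b2*b2*y1 + c1*d1*b1*y2*y2 - c1*d1*b1*b2*y2 + c1*d2*b2*x1*y1 - c1*d2*b1*x1*y2 - c1*d2*b1*b2*y1 + c1*d2*b1*b1*y2 + c2*b1*x2*y1*y1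 - c2*b1*x1*y1*y2 - c2*b1*b2*y1*y1 + c2*b1*b2*x1*y1 + c2*b1*b1*y1*y2 - c2*b1*b1*x2*y1 - c2*d1*x2*y1*y1 + c2*d1*x1*y1*y2 + c2*d1*b2*y1*y1 - c2*d1*b2*x1*y1 - c2*d1*b1*y1*y2 + c2*d1*b1*x2*y1) := by
    linear_combination (-x2*y1 + x1*y2 + b2*y1 - b1*y2) * hq1 - (-b2*y1 + b1*y2 - d1*y2 + d2*y1 + c1*b2 - c1*d2 - c2*b1 + c2*d1) * hp1
  have hf2 : (-d1*x2 + d2*x1 - c1*d2 + c2*d1) * (-x2*y1 + x1*y2 + b2*y1 - b1*y2) * (r2 - p2) = (d1*b2*x1*x2*y2 - d1*b1*x2*x2*y2 - d2*b2*x1*x1*y2 + d2*b1*x1*x2*y2 + c1*d2*x2*x2*y1 - c1*d2*x1*x2*y2 - c1*d2*b2*x2*y1 + c1*d2*b2*x1*y2 - c2*d1*b2*x1*y2 + c2*d1*b1*x2*y2 - c2*d2*x1*x2*y1 + c2*d2*x1*x1*y2 + c2*d2*b2*x1*y1 - c2*d2*b1*x1*y2) := by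
    linear_combination (-x2*y1 + x1*y2 + b2*y1 - b1*y2) * hr2 - (-d1*x2 + d2*x1 - c1*d2 + c2*d1) * hp2
  have hf3 : (-b2*y1 + b1*y2 - d1*y2 + d2*y1 + c1*b2 - c1*d2 - c2*b1 + c2*d1) * (-x2*y1 + x1*y2 + b2*y1 - b1*y2) * (q2 - p2) = (b2*b2*x1*y1*y2 - b1*b2*x2*y1*y2 - b1*b2*x1*y2*y2 + b1*b1*x2*y2*y2 + d1*b2*x2*y1*y2 - d1*b2*b2*y1*y2 - d1*b1*x2*y2*y2 + d1*b1*b2*y2*y2 - d2*b2*x1*y1*y2 + d2*b1*x1*y2*y2 + d2*b1*b2*y1*y2 - d2*b1*b1*y2*y2 - c1*b2*x2*y1*y2 + c1*b2*x1*y2*y2 + c1*b2*b2*y1*y2 - c1*b2*b2*x1*y2 - c1*b1*b2*y2*y2 + c1*b1*b2*x2*y2 + c1*d2*x2*y1*y2 - c1*d2*x1*y2*y2 - c1*d2*b2*y1*y2 + c1*d2*b2*x1*y2 + c1*d2*b1*y2*y2 - c1*d2*b1*x2*y2 + c2*b2*x2*y1*y1 - c2*b2*x1*y1*y2 - c2*b2*b2*y1*y1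 + c2*b1*b2*y1*y2 + c2*b1*b2*x1*y2 - c2*b1*b1*x2*y2 - c2*d1*b2*x2*y1 + c2*d1*b2*b2*y1 + c2*d1*b1*x2*y2 - c2*d1*b1*b2*y2 - c2*d2*x2*y1*y1 + c2*d2*x1*y1*y2 + c2*d2*b2*y1*y1 - c2*d2*b1*y1*y2 + c2*d2*b1*x2*y1 - c2*d2*b1*x1*y2 - c2*d2*b1*b2*y1 + c2*d2*b1*b1*y2) := by
    linear_combination (-x2*y1 + x1*y2 + b2*y1 - b1*y2) * hq2 - (-b2*y1 + b1*y2 - d1*y2 + d2*y1 + c1*b2 - c1*d2 - c2*b1 + c2*d1) * hp2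
  have hf4 : (-d1*x2 + d2*x1 - c1*d2 + c2*d1) * (-x2*y1 + x1*y2 + b2*y1 - b1*y2) * (r1 - p1) = (d1*b2*x1*x2*y1 - d1*b1*x2*x2*y1 - d2*b2*x1*x1*y1 + d2*b1*x1*x2*y1 + c1*d1*x2*x2*y1 - c1*d1*x1*x2*y2 - c1*d1*b2*x2*y1 + c1*d1*b1*x2*y2 + c1*d2*b2*x1*y1 - c1*d2*b1*x2*y1 - c2*d1*x1*x2*y1 + c2*d1*x1*x1*y2 + c2*d1*b1*x2*y1 - c2*d1*b1*x1*y2) := by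
    linear_combination (-x2*y1 + x1*y2 + b2*y1 - b1*y2) * hr1 - (-d1*x2 + d2*x1 - c1*d2 + c2*d1) * hp1
  have h0 : (b2*b2*x1*y1*y1 - b1*b2*x2*y1*y1 - b1*b2*x1*y1*y2 + b1*b1*x2*y1*y2 + d1*b2*x2*y1*y1 - d1*b2*b2*y1*y1 - d1*b1*x2*y1*y2 + d1*b1*b2*y1*y2 - d2*b2*x1*y1*y1 + d2*b1*x1*y1*y2 + d2*b1*b2*y1*y1 - d2*b1*b1*y1*y2 - c1*b2*b2*x1*y1 - c1*b1*x2*y1*y2 + c1*b1*x1*y2*y2 + c1*b1*b2*y1*y2 + c1*b1*b2*x2*y1 - c1*b1*b1*y2*y2 + c1*d1*x2*y1*y2 - c1*d1*x1*y2*y2 - c1*d1*b2*y1*y2 - c1*d1*b2*x2*y1 + c1*d1*b2*x1*y2 + c1*d1*b2*b2*y1 + c1*d1*b1*y2*y2 - c1*d1*b1*b2*y2 + c1*d2*b2*x1*y1 - c1*d2*b1*x1*y2 - c1*d2*b1*b2*y1 + c1*d2*b1*b1*y2 + c2*b1*x2*y1*y1 - c2*b1*x1*y1*y2 - c2*b1*b2*y1*y1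 + c2*b1*b2*x1*y1 + c2*b1*b1*y1*y2 - c2*b1*b1*x2*y1 - c2*d1*x2*y1*y1 + c2*d1*x1*y1*y2 + c2*d1*b2*y1*y1 - c2*d1*b2*x1*y1 - c2*d1*b1*y1*y2 + c2*d1*b1*x2*y1) * (d1*b2*x1*x2*y2 - d1*b1*x2*x2*y2 - d2*b2*x1*x1*y2 + d2*b1*x1*x2*y2 + c1*d2*x2*x2*y1 - c1*d2*x1*x2*y2 - c1*d2*b2*x2*y1 + c1*d2*b2*x1*y2 - c2*d1*b2*x1*y2 + c2*d1*b1*x2*y2 - c2*d2*x1*x2*y1 + c2*d2*x1*x1*y2 + c2*d2*b2*x1*y1 - c2*d2*b1*x1*y2) - (b2*b2*x1*y1*y2 - b1*b2*x2*y1*y2 - b1*b2*x1*y2*y2 + b1*b1*x2*y2*y2 + d1*b2*x2*y1*y2 - d1*b2*b2*y1*y2 - d1*b1*x2*y2*y2 + d1*b1*b2*y2*y2 - d2*b2*x1*y1*y2 + d2*b1*x1*y2*y2 + d2*b1*b2*y1*y2 - d2*b1*b1*y2*y2 - c1*b2*x2*y1*y2 + c1*b2*x1*y2*y2 + c1*b2*b2*y1*y2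 - c1*b2*b2*x1*y2 - c1*b1*b2*y2*y2 + c1*b1*b2*x2*y2 + c1*d2*x2*y1*y2 - c1*d2*x1*y2*y2 - c1*d2*b2*y1*y2 + c1*d2*b2*x1*y2 + c1*d2*b1*y2*y2 - c1*d2*b1*x2*y2 + c2*b2*x2*y1*y1 - c2*b2*x1*y1*y2 - c2*b2*b2*y1*y1 + c2*b1*b2*y1*y2 + c2*b1*b2*x1*y2 - c2*b1*b1*x2*y2 - c2*d1*b2*x2*y1 + c2*d1*b2*b2*y1 + c2*d1*b1*x2*y2 - c2*d1*b1*b2*y2 - c2*d2*x2*y1*y1 + c2*d2*x1*y1*y2 + c2*d2*b2*y1*y1 - c2*d2*b1*y1*y2 + c2*d2*b1*x2*y1 - c2*d2*b1*x1*y2 - c2*d2*b1*b2*y1 + c2*d2*b1*b1*y2) * (d1*b2*x1*x2*y1 - d1*b1*x2*x2*y1 - d2*b2*x1*x1*y1 + d2*b1*x1*x2*y1 + c1*d1*x2*x2*y1 - c1*d1*x1*x2*y2 - c1*d1*b2*x2*y1 + c1*d1*b1*x2*y2 + c1*d2*b2*x1*y1 - c1*d2*b1*x2*y1 - c2*d1*x1*x2*y1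 + c2*d1*x1*x1*y2 + c2*d1*b1*x2*y1 - c2*d1*b1*x1*y2) = 0 := by
    linear_combination (d1*b2*x2*x2*x2*y1*y1*y1 - d1*b2*x1*x2*x2*y1*y1*y2 - d1*b2*x1*x1*x2*y1*y2*y2 + d1*b2*x1*x1*x1*y2*y2*y2 - d1*b2*b2*x2*x2*y1*y1*y1 - d1*b2*b2*x1*x2*y1*y1*y2 + 2*d1*b2*b2*x1*x1*y1*y2*y2 - d1*b1*x2*x2*x2*y1*y1*y2 + 2*d1*b1*x1*x2*x2*y1*y2*y2 - d1*b1*x1*x1*x2*y2*y2*y2 + 2*d1*b1*b2*x2*x2*y1*y1*y2 - d1*b1*b2*x1*x2*y1*y2*y2 - d1*b1*b2*x1*x1*y2*y2*y2 - d1*b1*b1*x2*x2*y1*y2*y2 + d1*b1*b1*x1*x2*y2*y2*y2 + d1*d1*x2*x2*x2*y1*y1*y2 - 2*d1*d1*x1*x2*x2*y1*y2*y2 + d1*d1*x1*x1*x2*y2*y2*y2 - d1*d1*b2*x2*x2*y1*y1*y2 - d1*d1*b2*x2*x2*x2*y1*y1 + 2*d1*d1*b2*x1*x2*y1*y2*y2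 + d1*d1*b2*x1*x2*x2*y1*y2 - d1*d1*b2*x1*x1*y2*y2*y2 + d1*d1*b2*b2*x2*x2*y1*y1 - 2*d1*d1*b2*b2*x1*y1*y2*y2 + d1*d1*b2*b2*x1*x2*y1*y2 + d1*d1*b1*x2*x2*y1*y2*y2 - d1*d1*b1*x1*x2*y2*y2*y2 - d1*d1*b1*b2*x2*x2*y1*y2 + d1*d1*b1*b2*x1*y2*y2*y2 - d2*d1*x2*x2*x2*y1*y1*y1 + d2*d1*x1*x2*x2*y1*y1*y2 + d2*d1*x1*x1*x2*y1*y2*y2 - d2*d1*x1*x1*x1*y2*y2*y2 + d2*d1*b2*x2*x2*y1*y1*y1 - d2*d1*b2*x1*x1*y1*y2*y2 + d2*d1*b2*b2*x1*y1*y1*y2 - d2*d1*b2*b2*x1*x1*y1*y2 - d2*d1*b1*x2*x2*y1*y1*y2 + d2*d1*b1*x2*x2*x2*y1*y1 - d2*d1*b1*x1*x2*y1*y2*y2 - d2*d1*b1*x1*x2*x2*y1*y2 + 2*d2*d1*b1*x1*x1*y2*y2*y2 - d2*d1*b1*b2*x2*x2*y1*y1 + d2*d1*b1*b2*x1*y1*y2*y2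 + d2*d1*b1*b1*x2*x2*y1*y2 - d2*d1*b1*b1*x1*y2*y2*y2 + d2*d2*x1*x2*x2*y1*y1*y1 - 2*d2*d2*x1*x1*x2*y1*y1*y2 + d2*d2*x1*x1*x1*y1*y2*y2 - 2*d2*d2*b2*x1*x2*y1*y1*y1 + 2*d2*d2*b2*x1*x1*y1*y1*y2 + d2*d2*b2*x1*x1*x2*y1*y1 - d2*d2*b2*x1*x1*x1*y1*y2 + d2*d2*b2*b2*x1*y1*y1*y1 - d2*d2*b2*b2*x1*x1*y1*y1 + 2*d2*d2*b1*x1*x2*y1*y1*y2 - d2*d2*b1*x1*x2*x2*y1*y1 - 2*d2*d2*b1*x1*x1*y1*y2*y2 + d2*d2*b1*x1*x1*x2*y1*y2 - 2*d2*d2*b1*b2*x1*y1*y1*y2 + d2*d2*b1*b2*x1*x2*y1*y1 + d2*d2*b1*b2*x1*x1*y1*y2 + d2*d2*b1*b1*x1*y1*y2*y2 - d2*d2*b1*b1*x1*x2*y1*y2 - c1*d1*b2*x1*x2*y1*y2*y2 - c1*d1*b2*x1*x2*x2*y1*y2 + c1*d1*b2*x1*x1*y2*y2*y2 + c1*d1*b2*x1*x1*x2*y2*y2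 - c1*d1*b2*b2*x2*y1*y1*y2 + c1*d1*b2*b2*x1*x2*y1*y2 - c1*d1*b1*x2*x2*y1*y2*y2 + c1*d1*b1*x2*x2*x2*y1*y2 + c1*d1*b1*x1*x2*y2*y2*y2 - c1*d1*b1*x1*x2*x2*y2*y2 + 2*c1*d1*b1*b2*x2*y1*y2*y2 - c1*d1*b1*b2*x2*x2*y1*y2 - c1*d1*b1*b2*x1*x2*y2*y2 - c1*d1*b1*b1*x2*y2*y2*y2 + c1*d1*b1*b1*x2*x2*y2*y2 + c1*d1*d1*x2*x2*y1*y2*y2 - c1*d1*d1*x2*x2*x2*y1*y2 - c1*d1*d1*x1*x2*y2*y2*y2 + c1*d1*d1*x1*x2*x2*y2*y2 - 2*c1*d1*d1*b2*x2*y1*y2*y2 + 2*c1*d1*d1*b2*x2*x2*y1*y2 - c1*d1*d1*b2*x1*y2*y2*y2 + c1*d1*d1*b2*x1*x2*y2*y2 + c1*d1*d1*b1*x2*y2*y2*y2 - c1*d1*d1*b1*x2*x2*y2*y2 + c1*d2*x2*x2*x2*y1*y1*y1 - c1*d2*x1*x2*x2*y1*y1*y2 - c1*d2*x1*x1*x2*y1*y2*y2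 + c1*d2*x1*x1*x1*y2*y2*y2 - c1*d2*b2*x2*x2*y1*y1*y1 - 2*c1*d2*b2*x1*x2*y1*y1*y2 + c1*d2*b2*x1*x2*x2*y1*y1 + 3*c1*d2*b2*x1*x1*y1*y2*y2 - c1*d2*b2*x1*x1*x2*y1*y2 + c1*d2*b2*b2*x1*y1*y1*y2 - c1*d2*b2*b2*x1*x2*y1*y1 + c1*d2*b1*x2*x2*y1*y1*y2 - c1*d2*b1*x2*x2*x2*y1*y1 + c1*d2*b1*x1*x2*y1*y2*y2 + c1*d2*b1*x1*x2*x2*y1*y2 - 2*c1*d2*b1*x1*x1*y2*y2*y2 + c1*d2*b1*b2*x2*x2*y1*y1 - 2*c1*d2*b1*b2*x1*y1*y2*y2 + c1*d2*b1*b2*x1*x2*y1*y2 - c1*d2*b1*b1*x2*x2*y1*y2 + c1*d2*b1*b1*x1*y2*y2*y2 + c1*d2*d1*b2*x2*y1*y1*y2 - c1*d2*d1*b2*x2*x2*y1*y1 + 2*c1*d2*d1*b2*x1*x2*y1*y2 - 2*c1*d2*d1*b2*x1*x1*y2*y2 + c1*d2*d1*b2*b2*x2*y1*y1 - c1*d2*d1*b2*b2*x1*y1*y2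 - c1*d2*d1*b1*b2*x2*y1*y2 + c1*d2*d1*b1*b2*x1*y2*y2 - c1*d2*d2*x2*x2*y1*y1*y1 + c1*d2*d2*x1*x2*y1*y1*y2 + c1*d2*d2*x1*x1*x2*y1*y2 - c1*d2*d2*x1*x1*x1*y2*y2 + c1*d2*d2*b2*x2*y1*y1*y1 + c1*d2*d2*b2*x1*y1*y1*y2 - 2*c1*d2*d2*b2*x1*x1*y1*y2 - c1*d2*d2*b1*x2*y1*y1*y2 + c1*d2*d2*b1*x2*x2*y1*y1 - 2*c1*d2*d2*b1*x1*x2*y1*y2 + 2*c1*d2*d2*b1*x1*x1*y2*y2 - c1*d2*d2*b1*b2*x2*y1*y1 + c1*d2*d2*b1*b2*x1*y1*y2 + c1*d2*d2*b1*b1*x2*y1*y2 - c1*d2*d2*b1*b1*x1*y2*y2 - c2*d1*b2*x2*x2*y1*y1*y1 + 2*c2*d1*b2*x1*x2*y1*y1*y2 - c2*d1*b2*x1*x1*y1*y2*y2 + c2*d1*b2*x1*x1*x2*y1*y2 - c2*d1*b2*x1*x1*x1*y2*y2 + c2*d1*b2*b2*x2*y1*y1*y1 - c2*d1*b2*b2*x1*x1*y1*y2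 + c2*d1*b1*x2*x2*y1*y1*y2 - c2*d1*b1*x1*x2*y1*y2*y2 - c2*d1*b1*x1*x2*x2*y1*y2 + c2*d1*b1*x1*x1*x2*y2*y2 - 2*c2*d1*b1*b2*x2*y1*y1*y2 + c2*d1*b1*b2*x1*x2*y1*y2 + c2*d1*b1*b2*x1*x1*y2*y2 + c2*d1*b1*b1*x2*y1*y2*y2 - c2*d1*b1*b1*x1*x2*y2*y2 - c2*d1*d1*x2*x2*y1*y1*y2 + c2*d1*d1*x1*x2*y1*y2*y2 + c2*d1*d1*x1*x2*x2*y1*y2 - c2*d1*d1*x1*x1*x2*y2*y2 + c2*d1*d1*b2*x2*y1*y1*y2 + c2*d1*d1*b2*x2*x2*y1*y1 + c2*d1*d1*b2*x1*y1*y2*y2 - 4*c2*d1*d1*b2*x1*x2*y1*y2 + c2*d1*d1*b2*x1*x1*y2*y2 - c2*d1*d1*b2*b2*x2*y1*y1 + c2*d1*d1*b2*b2*x1*y1*y2 - c2*d1*d1*b1*x2*y1*y2*y2 + c2*d1*d1*b1*x1*x2*y2*y2 + c2*d1*d1*b1*b2*x2*y1*y2 - c2*d1*d1*b1*b2*x1*y2*y2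 - c2*d2*x1*x2*x2*y1*y1*y1 + 2*c2*d2*x1*x1*x2*y1*y1*y2 - c2*d2*x1*x1*x1*y1*y2*y2 + 2*c2*d2*b2*x1*x2*y1*y1*y1 - 2*c2*d2*b2*x1*x1*y1*y1*y2 - c2*d2*b2*x1*x1*x2*y1*y1 + c2*d2*b2*x1*x1*x1*y1*y2 - c2*d2*b2*b2*x1*y1*y1*y1 + c2*d2*b2*b2*x1*x1*y1*y1 - 2*c2*d2*b1*x1*x2*y1*y1*y2 + c2*d2*b1*x1*x2*x2*y1*y1 + 2*c2*d2*b1*x1*x1*y1*y2*y2 - c2*d2*b1*x1*x1*x2*y1*y2 + 2*c2*d2*b1*b2*x1*y1*y1*y2 - c2*d2*b1*b2*x1*x2*y1*y1 - c2*d2*b1*b2*x1*x1*y1*y2 - c2*d2*b1*b1*x1*y1*y2*y2 + c2*d2*b1*b1*x1*x2*y1*y2 + c2*d2*d1*x2*x2*y1*y1*y1 - c2*d2*d1*x1*x2*y1*y1*y2 - c2*d2*d1*x1*x1*x2*y1*y2 + c2*d2*d1*x1*x1*x1*y2*y2 - c2*d2*d1*b2*x2*y1*y1*y1 - c2*d2*d1*b2*x1*y1*y1*y2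 + 2*c2*d2*d1*b2*x1*x1*y1*y2 + c2*d2*d1*b1*x2*y1*y1*y2 - c2*d2*d1*b1*x2*x2*y1*y1 + 2*c2*d2*d1*b1*x1*x2*y1*y2 - 2*c2*d2*d1*b1*x1*x1*y2*y2 + c2*d2*d1*b1*b2*x2*y1*y1 - c2*d2*d1*b1*b2*x1*y1*y2 - c2*d2*d1*b1*b1*x2*y1*y2 + c2*d2*d1*b1*b1*x1*y2*y2) * hABC + (-c1*d1*b2*b2*x2*x2*y1*y1 + c1*d1*b2*b2*x1*x1*y2*y2 + c1*d1*b2*b2*b2*x2*y1*y1 + 2*c1*d1*b2*b2*b2*x1*y1*y2 + c1*d1*b1*b2*x2*x2*y1*y2 - c1*d1*b1*b2*x1*x2*y2*y2 - 2*c1*d1*b1*b2*b2*x2*y1*y2 - c1*d1*b1*b2*b2*x1*y2*y2 + c1*d1*b1*b1*b2*x2*y2*y2 - c1*d2*b2*b2*x1*x2*y1*y1 + c1*d2*b2*b2*x1*x1*y1*y2 + c1*d2*b2*b2*b2*x1*y1*y1 + c1*d2*b1*b2*x2*x2*y1*y1 - c1*d2*b1*b2*x1*x1*y2*y2 - c1*d2*b1*b2*b2*x2*y1*y1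 - 2*c1*d2*b1*b2*b2*x1*y1*y2 - c1*d2*b1*b1*x2*x2*y1*y2 + c1*d2*b1*b1*x1*x2*y2*y2 + 2*c1*d2*b1*b1*b2*x2*y1*y2 + c1*d2*b1*b1*b2*x1*y2*y2 - c1*d2*b1*b1*b1*x2*y2*y2 - c1*c1*d1*b2*x2*x2*y1*y2 + c1*c1*d1*b2*x1*x2*y2*y2 + 2*c1*c1*d1*b2*b2*x2*y1*y2 + c1*c1*d1*b2*b2*x1*y2*y2 - c1*c1*d1*b1*b2*x2*y2*y2 - c1*c1*d2*b2*x2*x2*y1*y1 + c1*c1*d2*b2*x1*x1*y2*y2 + c1*c1*d2*b2*b2*x2*y1*y1 + 2*c1*c1*d2*b2*b2*x1*y1*y2 + c1*c1*d2*b1*x2*x2*y1*y2 - c1*c1*d2*b1*x1*x2*y2*y2 - 2*c1*c1*d2*b1*b2*x2*y1*y2 - c1*c1*d2*b1*b2*x1*y2*y2 + c1*c1*d2*b1*b1*x2*y2*y2 + c2*d1*b2*b2*x1*x2*y1*y1 - c2*d1*b2*b2*x1*x1*y1*y2 - c2*d1*b2*b2*b2*x1*y1*y1 + c2*c1*d1*b2*x2*x2*y1*y1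 - c2*c1*d1*b2*x1*x1*y2*y2 - c2*c1*d1*b2*b2*x2*y1*y1 - 2*c2*c1*d1*b2*b2*x1*y1*y2 + c2*c1*d2*b2*x1*x2*y1*y1 - c2*c1*d2*b2*x1*x1*y1*y2 - c2*c1*d2*b2*b2*x1*y1*y1 - c2*c2*d1*b2*x1*x2*y1*y1 + c2*c2*d1*b2*x1*x1*y1*y2 + c2*c2*d1*b2*b2*x1*y1*y1) * hXYZ
  have h1 : (-b2*y1 + b1*y2 - d1*y2 + d2*y1 + c1*b2 - c1*d2 - c2*b1 + c2*d1) * (-x2*y1 + x1*y2 + b2*y1 - b1*y2) * (q1 - p1) * ((-d1*x2 + d2*x1 - c1*d2 + c2*d1) * (-x2*y1 + x1*y2 + b2*y1 - b1*y2) * (r2 - p2)) -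
      (-b2*y1 + b1*y2 - d1*y2 + d2*y1 + c1*b2 - c1*d2 - c2*b1 + c2*d1) * (-x2*y1 + x1*y2 + b2*y1 - b1*y2) * (q2 - p2) * ((-d1*x2 + d2*x1 - c1*d2 + c2*d1) * (-x2*y1 + x1*y2 + b2*y1 - b1*y2) * (r1 - p1)) = 0 := by
    rw [hf1, hf2, hf3, hf4]; exact h0
  exact cancel_helper ((-b2*y1 + b1*y2 - d1*y2 + d2*y1 + c1*b2 - c1*d2 - c2*b1 + c2*d1) * (-x2*y1 + x1*y2 + b2*y1 - b1*y2)) ((-d1*x2 + d2*x1 - c1*d2 + c2*d1) * (-x2*y1 + x1*y2 + b2*y1 - b1*y2)) _ _ _ _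
    (mul_ne_zero hdQ hdP) (mul_ne_zero hdR hdP) h1

/-- Pappus' theorem in the real affine plane: if `A, B, C` are distinct collinear points
on a line `ℓ` and `A', B', C'` are distinct collinear points on a different line `ℓ'`,
with none of the six points on both lines, and `P`, `Q`, `R` are the intersection points
of the cross lines `AB' ∩ A'B`, `BC' ∩ B'C`, `AC' ∩ A'C` (each pair of cross lines
being distinct), then `P, Q, R` are collinear. -/
theorem pappus_affine_plane
    (A B C A' B' C' P Q R : EuclideanSpace ℝ (Fin 2))
    (hAB : A ≠ B) (hAC : A ≠ C) (hBC : B ≠ C)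
    (hA'B' : A' ≠ B') (hA'C' : A' ≠ C') (hB'C' : B' ≠ C')
    -- the two lines
    (ℓ ℓ' : AffineSubspace ℝ (EuclideanSpace ℝ (Fin 2)))
    (hℓ : ℓ = affineSpan ℝ ({A, B} : Set (EuclideanSpace ℝ (Fin 2))))
    (hℓ' : ℓ' = affineSpan ℝ ({A', B'} : Set (EuclideanSpace ℝ (Fin 2))))
    (hCℓ : C ∈ ℓ) (hC'ℓ' : C' ∈ ℓ')
    (hll : ℓ ≠ ℓ')
    (hnotboth : ∀ X ∈ ({A, B, C, A', B', C'} : Set (EuclideanSpace ℝ (Fin 2))),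
      ¬(X ∈ ℓ ∧ X ∈ ℓ'))
    -- P on both cross lines AB' and A'B, the two cross lines being distinct
    (hP₁ : Collinear ℝ ({A, B', P} : Set (EuclideanSpace ℝ (Fin 2))))
    (hP₂ : Collinear ℝ ({A', B, P} : Set (EuclideanSpace ℝ (Fin 2))))
    (hPd : affineSpan ℝ ({A, B'} : Set (EuclideanSpace ℝ (Fin 2))) ≠
           affineSpan ℝ ({A', B} : Set (EuclideanSpace ℝ (Fin 2))))
    -- Q on both cross lines BC' and B'C, the two cross lines being distinct
    (hQ₁ : Collinear ℝ ({B, C', Q} : Set (EuclideanSpace ℝ (Fin 2))))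
    (hQ₂ : Collinear ℝ ({B', C, Q} : Set (EuclideanSpace ℝ (Fin 2))))
    (hQd : affineSpan ℝ ({B, C'} : Set (EuclideanSpace ℝ (Fin 2))) ≠
           affineSpan ℝ ({B', C} : Set (EuclideanSpace ℝ (Fin 2))))
    -- R on both cross lines AC' and A'C, the two cross lines being distinct
    (hR₁ : Collinear ℝ ({A, C', R} : Set (EuclideanSpace ℝ (Fin 2))))
    (hR₂ : Collinear ℝ ({A', C, R} : Set (EuclideanSpace ℝ (Fin 2))))
    (hRd : affineSpan ℝ ({A, C'} : Set (EuclideanSpace ℝ (Fin 2))) ≠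
           affineSpan ℝ ({A', C} : Set (EuclideanSpace ℝ (Fin 2)))) :
    Collinear ℝ ({P, Q, R} : Set (EuclideanSpace ℝ (Fin 2))) := by
  have hAmem : A ∈ ℓ := by rw [hℓ]; exact left_mem_affineSpan_pair ℝ A B
  have hBmem : B ∈ ℓ := by rw [hℓ]; exact right_mem_affineSpan_pair ℝ A B
  have hA'mem : A' ∈ ℓ' := by rw [hℓ']; exact left_mem_affineSpan_pair ℝ A' B'
  have hB'mem : B' ∈ ℓ' := by rw [hℓ']; exact right_mem_affineSpan_pair ℝ A' B'
  have hAB' : A ≠ B' := fun h => hnotboth A (by simp) ⟨hAmem, by rw [h]; exact hB'mem⟩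
  have hA'B : A' ≠ B := fun h => hnotboth B (by simp) ⟨hBmem, by rw [← h]; exact hA'mem⟩
  have hBC' : B ≠ C' := fun h => hnotboth B (by simp) ⟨hBmem, by rw [h]; exact hC'ℓ'⟩
  have hB'C : B' ≠ C := fun h => hnotboth C (by simp) ⟨hCℓ, by rw [← h]; exact hB'mem⟩
  have hAC' : A ≠ C' := fun h => hnotboth A (by simp) ⟨hAmem, by rw [h]; exact hC'ℓ'⟩
  have hA'C : A' ≠ C := fun h => hnotboth C (by simp) ⟨hCℓ, by rw [← h]; exact hA'mem⟩
  have hABCcol : Collinear ℝ ({C, A, B} : Set (EuclideanSpace ℝ (Fin 2))) :=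
    collinear_insert_of_mem_affineSpan_pair (by rw [← hℓ]; exact hCℓ)
  have hA'B'C'col : Collinear ℝ ({C', A', B'} : Set (EuclideanSpace ℝ (Fin 2))) :=
    collinear_insert_of_mem_affineSpan_pair (by rw [← hℓ']; exact hC'ℓ')
  have h1 := det3_eq_zero_of_collinear hABCcol
  have h2 := det3_eq_zero_of_collinear hA'B'C'col
  have e1' := det3_eq_zero_of_collinear hP₁
  have e2' := det3_eq_zero_of_collinear hP₂
  have e3' := det3_eq_zero_of_collinear hQ₁
  have e4' := det3_eq_zero_of_collinear hQ₂
  have e5' := det3_eq_zero_of_collinear hR₁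
  have e6' := det3_eq_zero_of_collinear hR₂
  simp only [det3] at h1 h2 e1' e2' e3' e4' e5' e6'
  have hdP := cross_ne_of_spans_ne hAB' hA'B hP₁ hP₂ hPd
  have hdQ := cross_ne_of_spans_ne hBC' hB'C hQ₁ hQ₂ hQd
  have hdR := cross_ne_of_spans_ne hAC' hA'C hR₁ hR₂ hRd
  apply collinear_of_det3_eq_zero
  have key := pappus_coords (B 0 - A 0) (B 1 - A 1) (A' 0 - A 0) (A' 1 - A 1)
    (B' 0 - A 0) (B' 1 - A 1) (C 0 - A 0) (C 1 - A 1) (C' 0 - A 0) (C' 1 - A 1)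
    (P 0 - A 0) (P 1 - A 1) (Q 0 - A 0) (Q 1 - A 1) (R 0 - A 0) (R 1 - A 1)
    (by linear_combination h1) (by linear_combination h2)
    (by linear_combination e1') (by linear_combination e2')
    (by linear_combination e3') (by linear_combination e4')
    (by linear_combination e5') (by linear_combination e6')
    (fun h => hdP (by linear_combination h))
    (fun h => hdQ (by linear_combination h))
    (fun h => hdR (by linear_combination h))
  simp only [det3]
  linear_combination key
end

section
/- Let O, A, B, C be affinely independent points in ℝ³ (the vertices of a tetrahedron). Let A' be a point on line OA distinct from O and A, let B' be a point on line OB distinct from O and B, and let C' be a point on line OC distinct from O and C. Suppose P lies on both line BC and line B'C', Q lies on both line AC and line A'C', and R lies on both line AB and line A'B'. Then the four points O, P, Q, R are coplanar. -/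
open FiniteDimensional Module

private lemma key_fzero {E : Type*} [AddCommGroup E] [Module ℝ E]
    (f : E →ₗ[ℝ] ℝ) {v w p : E} {x y s t m₁ m₂ : ℝ}
    (hpair : ∀ α β : ℝ, α • v + β • w = 0 → α = 0 ∧ β = 0)
    (h1 : p = (1-t) • v + t • w)
    (h2 : p = ((1-s)*x) • v + (s*y) • w)
    (hfv : f v = m₁ * (x - 1)) (hfw : f w = m₂ * (y - 1))
    (hm : m₁ * x = m₂ * y) : f p = 0 := by
  have hd : ((1-t) - (1-s)*x) • v + (t - s*y) • w = 0 := by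
    have := h1.symm.trans h2
    rw [sub_smul, sub_smul]
    linear_combination (norm := module) this
  obtain ⟨e1, e2⟩ := hpair _ _ hd
  have e1' : 1 - t = (1-s)*x := by linarith
  have e2' : t = s*y := by linarith
  rw [h2, map_add, map_smul, map_smul, hfv, hfw, smul_eq_mul, smul_eq_mul]
  linear_combination (-(m₁*x))*e1' + (-(m₁*x))*e2' + (-(s*(y-1)))*hm

/-- Let `O, A, B, C` be affinely independent points in `ℝ³`, and let `A'`, `B'`, `C'`
lie on the lines `OA`, `OB`, `OC` respectively, each distinct from the corresponding
two vertices. If `P` lies on both lines `BC` and `B'C'`, `Q` on both lines `AC` and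
`A'C'`, and `R` on both lines `AB` and `A'B'`, then `O, P, Q, R` are coplanar. -/
theorem tetrahedron_OPQR_coplanar
    (O A B C A' B' C' P Q R : EuclideanSpace ℝ (Fin 3))
    (hindep : AffineIndependent ℝ ![O, A, B, C])
    (hA' : A' ∈ affineSpan ℝ ({O, A} : Set (EuclideanSpace ℝ (Fin 3))))
    (hA'O : A' ≠ O) (hA'A : A' ≠ A)
    (hB' : B' ∈ affineSpan ℝ ({O, B} : Set (EuclideanSpace ℝ (Fin 3))))
    (hB'O : B' ≠ O) (hB'B : B' ≠ B)
    (hC' : C' ∈ affineSpan ℝ ({O, C} : Set (EuclideanSpace ℝ (Fin 3))))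
    (hC'O : C' ≠ O) (hC'C : C' ≠ C)
    (hP₁ : P ∈ affineSpan ℝ ({B, C} : Set (EuclideanSpace ℝ (Fin 3))))
    (hP₂ : P ∈ affineSpan ℝ ({B', C'} : Set (EuclideanSpace ℝ (Fin 3))))
    (hQ₁ : Q ∈ affineSpan ℝ ({A, C} : Set (EuclideanSpace ℝ (Fin 3))))
    (hQ₂ : Q ∈ affineSpan ℝ ({A', C'} : Set (EuclideanSpace ℝ (Fin 3))))
    (hR₁ : R ∈ affineSpan ℝ ({A, B} : Set (EuclideanSpace ℝ (Fin 3))))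
    (hR₂ : R ∈ affineSpan ℝ ({A', B'} : Set (EuclideanSpace ℝ (Fin 3)))) :
    Coplanar ℝ ({O, P, Q, R} : Set (EuclideanSpace ℝ (Fin 3))) := by
  have mem_line_sub : ∀ {p q x : EuclideanSpace ℝ (Fin 3)},
      x ∈ affineSpan ℝ ({p, q} : Set (EuclideanSpace ℝ (Fin 3))) →
      ∃ r : ℝ, x - p = r • (q - p) := by
    intro p q x h
    have hd := AffineSubspace.vsub_mem_direction h (left_mem_affineSpan_pair ℝ p q)
    rw [direction_affineSpan] at hd
    obtain ⟨r, hr⟩ := mem_vectorSpan_pair_rev.mp hd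
    exact ⟨r, by simpa [vsub_eq_sub] using hr.symm⟩
  obtain ⟨a, ha⟩ := mem_line_sub hA'
  obtain ⟨b, hb⟩ := mem_line_sub hB'
  obtain ⟨c, hc⟩ := mem_line_sub hC'
  have ha0 : a ≠ 0 := fun h => hA'O (by rw [h, zero_smul] at ha; exact sub_eq_zero.mp ha)
  have hb0 : b ≠ 0 := fun h => hB'O (by rw [h, zero_smul] at hb; exact sub_eq_zero.mp hb)
  have hc0 : c ≠ 0 := fun h => hC'O (by rw [h, zero_smul] at hc; exact sub_eq_zero.mp hc)
  have ha1 : a ≠ 1 := fun h => hA'A (by rw [h, one_smul] at ha; exact sub_left_inj.mp ha)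
  have hb1 : b ≠ 1 := fun h => hB'B (by rw [h, one_smul] at hb; exact sub_left_inj.mp hb)
  have hc1 : c ≠ 1 := fun h => hC'C (by rw [h, one_smul] at hc; exact sub_left_inj.mp hc)
  -- linear independence of the edge vectors
  have h0 := (affineIndependent_iff_linearIndependent_vsub ℝ ![O, A, B, C] 0).mp hindep
  have hli : LinearIndependent ℝ ![A - O, B - O, C - O] := by
    have hcomp := h0.comp (fun i : Fin 3 => (⟨i.succ, Fin.succ_ne_zero i⟩ : {x : Fin 4 // x ≠ 0}))
      (fun i j hij => by
        have : (i.succ : Fin 4) = j.succ := congrArg Subtype.val hij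
        exact Fin.succ_injective _ this)
    convert hcomp using 1
    funext i
    fin_cases i <;> simp [vsub_eq_sub]
    rfl
  have hcoeffs : ∀ x y z : ℝ, x • (A - O) + y • (B - O) + z • (C - O) = 0 →
      x = 0 ∧ y = 0 ∧ z = 0 := by
    intro x y z hxyz
    have := Fintype.linearIndependent_iff.mp hli ![x, y, z]
      (by simpa [Fin.sum_univ_three] using hxyz)
    exact ⟨this 0, this 1, this 2⟩
  have hpBC : ∀ α β : ℝ, α • (B - O) + β • (C - O) = 0 → α = 0 ∧ β = 0 := by
    intro α β h
    obtain ⟨_, h2, h3⟩ := hcoeffs 0 α β (by simpa using h)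
    exact ⟨h2, h3⟩
  have hpAC : ∀ α β : ℝ, α • (A - O) + β • (C - O) = 0 → α = 0 ∧ β = 0 := by
    intro α β h
    obtain ⟨h1, _, h3⟩ := hcoeffs α 0 β (by simpa using h)
    exact ⟨h1, h3⟩
  have hpAB : ∀ α β : ℝ, α • (A - O) + β • (B - O) = 0 → α = 0 ∧ β = 0 := by
    intro α β h
    obtain ⟨h1, h2, _⟩ := hcoeffs α β 0 (by simpa using h)
    exact ⟨h1, h2⟩
  -- the linear functional
  have hcard : Fintype.card (Fin 3) = finrank ℝ (EuclideanSpace ℝ (Fin 3)) := by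
    simp [finrank_euclideanSpace]
  set bas := basisOfLinearIndependentOfCardEqFinrank hli hcard with hbas
  set f : EuclideanSpace ℝ (Fin 3) →ₗ[ℝ] ℝ :=
    bas.constr ℝ ![(a-1)*b*c, a*(b-1)*c, a*b*(c-1)] with hf
  have hbase : ∀ i : Fin 3, bas i = ![A - O, B - O, C - O] i := by
    intro i
    rw [hbas, coe_basisOfLinearIndependentOfCardEqFinrank]
  have hfA : f (A - O) = (a-1)*b*c := by
    have h1 : (A - O) = bas 0 := by rw [hbase]; rfl
    rw [h1, hf, Basis.constr_basis]; rfl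
  have hfB : f (B - O) = a*(b-1)*c := by
    have h1 : (B - O) = bas 1 := by rw [hbase]; rfl
    rw [h1, hf, Basis.constr_basis]; rfl
  have hfC : f (C - O) = a*b*(c-1) := by
    have h1 : (C - O) = bas 2 := by rw [hbase]; rfl
    rw [h1, hf, Basis.constr_basis]; rfl
  -- P
  obtain ⟨t, htP⟩ := mem_line_sub hP₁
  obtain ⟨s, hsP⟩ := mem_line_sub hP₂
  have hfP : f (P - O) = 0 := by
    refine key_fzero f hpBC (t := t) (s := s) (x := b) (y := c) (m₁ := a*c) (m₂ := a*b)
      ?_ ?_ (by rw [hfB]; try ring) (by rw [hfC]; try ring) (by ring)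
    · linear_combination (norm := module) htP
    · linear_combination (norm := module) hsP + s • hc - s • hb + hb
  -- Q
  obtain ⟨t, htQ⟩ := mem_line_sub hQ₁
  obtain ⟨s, hsQ⟩ := mem_line_sub hQ₂
  have hfQ : f (Q - O) = 0 := by
    refine key_fzero f hpAC (t := t) (s := s) (x := a) (y := c) (m₁ := b*c) (m₂ := a*b)
      ?_ ?_ (by rw [hfA]; try ring) (by rw [hfC]; try ring) (by ring)
    · linear_combination (norm := module) htQ
    · linear_combination (norm := module) hsQ + s • hc - s • ha + ha
  -- R
  obtain ⟨t, htR⟩ := mem_line_sub hR₁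
  obtain ⟨s, hsR⟩ := mem_line_sub hR₂
  have hfR : f (R - O) = 0 := by
    refine key_fzero f hpAB (t := t) (s := s) (x := a) (y := b) (m₁ := b*c) (m₂ := a*c)
      ?_ ?_ (by rw [hfA]; try ring) (by rw [hfB]; try ring) (by ring)
    · linear_combination (norm := module) htR
    · linear_combination (norm := module) hsR + s • hb - s • ha + ha
  -- conclude
  have hker : ∀ X ∈ ({O, P, Q, R} : Set (EuclideanSpace ℝ (Fin 3))), f (X - O) = 0 := by
    rintro X (rfl | rfl | rfl | rfl)
    · simp
    · exact hfP
    · exact hfQ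
    · exact hfR
  have hsub : vectorSpan ℝ ({O, P, Q, R} : Set (EuclideanSpace ℝ (Fin 3))) ≤ LinearMap.ker f := by
    rw [vectorSpan_eq_span_vsub_set_right ℝ
      (Set.mem_insert O ({P, Q, R} : Set (EuclideanSpace ℝ (Fin 3)))), Submodule.span_le]
    rintro x ⟨y, hy, rfl⟩
    simp only [SetLike.mem_coe, LinearMap.mem_ker, vsub_eq_sub]
    exact hker y hy
  have hkdim : finrank ℝ (LinearMap.ker f) ≤ 2 := by
    have hrank := LinearMap.finrank_range_add_finrank_ker f
    rw [finrank_euclideanSpace, Fintype.card_fin] at hrank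
    have hnt : Nontrivial (LinearMap.range f) := by
      refine ⟨⟨⟨f (A - O), LinearMap.mem_range_self _ _⟩, 0, ?_⟩⟩
      simp only [ne_eq, Submodule.mk_eq_zero, hfA]
      exact mul_ne_zero (mul_ne_zero (sub_ne_zero.mpr ha1) hb0) hc0
    have hrpos : 0 < finrank ℝ (LinearMap.range f) := finrank_pos
    omega
  rw [coplanar_iff_finrank_le_two]
  exact le_trans (Submodule.finrank_mono hsub) hkdim
end

section
/- Buck's upper bound on chambers: let H₁, …, Hₙ be n affine hyperplanes in ℝ^d, where H_i = {x | ⟪a_i, x⟫ = b_i} with a_i ≠ 0. Then the complement ℝ^d \ (H₁ ∪ ⋯ ∪ Hₙ) has finitely many connected components, and the number of connected components is at most ∑_{i=0}^{d} C(n, i). -/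
open scoped RealInnerProductSpace
open Finset Module

noncomputable section BuckAux

/-- The open cell (chamber) associated to a sign vector `s`. -/
def bcell {E : Type} [NormedAddCommGroup E] [InnerProductSpace ℝ E]
    {n : ℕ} (a : Fin n → E) (b : Fin n → ℝ) (s : Fin n → Bool) : Set E :=
  {x | ∀ i, if s i then b i < ⟪a i, x⟫ else ⟪a i, x⟫ < b i}

variable {E : Type} [NormedAddCommGroup E] [InnerProductSpace ℝ E]

lemma bcell_convex {n : ℕ} (a : Fin n → E) (b : Fin n → ℝ) (s : Fin n → Bool) :
    Convex ℝ (bcell a b s) := by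
  have h : bcell a b s
      = ⋂ i, {x : E | if s i then b i < ⟪a i, x⟫ else ⟪a i, x⟫ < b i} := by
    ext x; simp [bcell, Set.mem_iInter]
  rw [h]
  refine convex_iInter fun i => ?_
  have hlin : IsLinearMap ℝ (fun x : E => ⟪a i, x⟫) :=
    ⟨fun x y => inner_add_right _ _ _, fun c x => real_inner_smul_right _ _ _⟩
  cases hs : s i with
  | true => simpa [hs] using convex_halfSpace_gt hlin (b i)
  | false => simpa [hs] using convex_halfSpace_lt hlin (b i)

lemma bcell_open {n : ℕ} (a : Fin n → E) (b : Fin n → ℝ) (s : Fin n → Bool) :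
    IsOpen (bcell a b s) := by
  have h : bcell a b s
      = ⋂ i, {x : E | if s i then b i < ⟪a i, x⟫ else ⟪a i, x⟫ < b i} := by
    ext x; simp [bcell, Set.mem_iInter]
  rw [h]
  refine isOpen_iInter_of_finite fun i => ?_
  have hc : Continuous fun x : E => ⟪a i, x⟫ := continuous_const.inner continuous_id
  cases hs : s i with
  | true => simp only [hs, ↓reduceIte]; exact isOpen_Ioi.preimage hc
  | false => simp only [hs, Bool.false_eq_true, ↓reduceIte]; exact isOpen_Iio.preimage hc

lemma pascal_sum (n d : ℕ) :
    ∑ i ∈ range (d + 1), (n + 1).choose i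
      = ∑ i ∈ range (d + 1), n.choose i + ∑ i ∈ range d, n.choose i := by
  induction d with
  | zero => simp
  | succ d ihd =>
    rw [Finset.sum_range_succ, ihd, Finset.sum_range_succ (fun i => n.choose i) (d + 1),
      Finset.sum_range_succ (fun i => n.choose i) d, Nat.choose_succ_succ]
    ring

/-- Buck's bound for the number of nonempty sign cells, in an arbitrary
finite-dimensional real inner product space; no nondegeneracy hypothesis needed. -/
lemma buck_main : ∀ (n : ℕ) (E : Type) [NormedAddCommGroup E] [InnerProductSpace ℝ E]
    [FiniteDimensional ℝ E] (a : Fin n → E) (b : Fin n → ℝ),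
    Nat.card {s : Fin n → Bool // (bcell a b s).Nonempty}
      ≤ ∑ i ∈ range (finrank ℝ E + 1), n.choose i := by
  intro n
  induction n with
  | zero =>
    intro E _ _ _ a b
    have h1 : Nat.card {s : Fin 0 → Bool // (bcell a b s).Nonempty} ≤ 1 := by
      have h2 : Nat.card {s : Fin 0 → Bool // (bcell a b s).Nonempty}
          ≤ Nat.card (Fin 0 → Bool) :=
        Nat.card_le_card_of_injective Subtype.val Subtype.val_injective
      simpa [Nat.card_eq_fintype_card] using h2
    refine h1.trans ?_
    calc 1 = Nat.choose 0 0 := rfl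
      _ ≤ ∑ i ∈ range (finrank ℝ E + 1), Nat.choose 0 i :=
        Finset.single_le_sum (fun i _ => Nat.zero_le _) (by simp)
  | succ n ih =>
    intro E _ _ _ a b
    classical
    set d := finrank ℝ E with hd
    set aL := a (Fin.last n) with haL
    set bL := b (Fin.last n) with hbL
    set a' : Fin n → E := fun j => a j.castSucc with ha'
    set b' : Fin n → ℝ := fun j => b j.castSucc with hb'
    -- restriction of a cell to the deletion arrangement
    have hrestr : ∀ s : Fin (n + 1) → Bool, ∀ x, x ∈ bcell a b s →
        x ∈ bcell a' b' (fun j => s j.castSucc) := by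
      intro s x hx j
      exact hx j.castSucc
    -- T : set of split sign vectors
    set T := {t : Fin n → Bool // (bcell a b (Fin.snoc t true)).Nonempty ∧
        (bcell a b (Fin.snoc t false)).Nonempty} with hT
    set S' := {t : Fin n → Bool // (bcell a' b' t).Nonempty} with hS'
    -- step 1 : |S| ≤ |S'| + |T|
    have hstep1 : Nat.card {s : Fin (n + 1) → Bool // (bcell a b s).Nonempty}
        ≤ Nat.card S' + Nat.card T := by
      rw [← Nat.card_sum]
      have hini : ∀ s : Fin (n + 1) → Bool, (bcell a b s).Nonempty →
          (bcell a' b' (Fin.init s)).Nonempty := by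
        rintro s ⟨x, hx⟩
        exact ⟨x, hrestr s x hx⟩
      set f : {s : Fin (n + 1) → Bool // (bcell a b s).Nonempty} → S' ⊕ T :=
        fun s =>
          if h : ((bcell a b (Fin.snoc (Fin.init s.1) true)).Nonempty ∧
              (bcell a b (Fin.snoc (Fin.init s.1) false)).Nonempty) ∧
              s.1 (Fin.last n) = true then
            Sum.inr ⟨Fin.init s.1, h.1⟩
          else Sum.inl ⟨Fin.init s.1, hini s.1 s.2⟩ with hf
      refine Nat.card_le_card_of_injective f ?_
      rintro ⟨s₁, hs₁⟩ ⟨s₂, hs₂⟩ hfe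
      simp only [hf] at hfe
      have key : Fin.init s₁ = Fin.init s₂ → s₁ (Fin.last n) = s₂ (Fin.last n) →
          (⟨s₁, hs₁⟩ : {s : Fin (n + 1) → Bool // (bcell a b s).Nonempty}) = ⟨s₂, hs₂⟩ := by
        intro h1 h2
        refine Subtype.ext (funext fun i => ?_)
        rcases Fin.eq_castSucc_or_eq_last i with ⟨j, rfl⟩ | rfl
        · exact congrFun h1 j
        · exact h2
      by_cases h1 : ((bcell a b (Fin.snoc (Fin.init s₁) true)).Nonempty ∧
          (bcell a b (Fin.snoc (Fin.init s₁) false)).Nonempty) ∧ s₁ (Fin.last n) = true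
      <;> by_cases h2 : ((bcell a b (Fin.snoc (Fin.init s₂) true)).Nonempty ∧
          (bcell a b (Fin.snoc (Fin.init s₂) false)).Nonempty) ∧ s₂ (Fin.last n) = true
      · rw [dif_pos h1, dif_pos h2] at hfe
        have hfe' : Fin.init s₁ = Fin.init s₂ := by
          have := Sum.inr.inj hfe
          simpa using congrArg Subtype.val this
        exact key hfe' (h1.2.trans h2.2.symm)
      · rw [dif_pos h1, dif_neg h2] at hfe
        exact absurd hfe (by simp)
      · rw [dif_neg h1, dif_pos h2] at hfe
        exact absurd hfe (by simp)
      · rw [dif_neg h1, dif_neg h2] at hfe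
        have hfe : Fin.init s₁ = Fin.init s₂ := by
          have := Sum.inl.inj hfe
          simpa using congrArg Subtype.val this
        refine key hfe ?_
        by_contra hne
        -- different last bits, same init : both extensions nonempty
        have hboth : (bcell a b (Fin.snoc (Fin.init s₁) true)).Nonempty ∧
            (bcell a b (Fin.snoc (Fin.init s₁) false)).Nonempty := by
          rcases Bool.eq_false_or_eq_true (s₁ (Fin.last n)) with hb1 | hb1
          · have hb2 : s₂ (Fin.last n) = false := by
              cases hb2 : s₂ (Fin.last n) with
              | false => rfl
              | true => exact absurd (hb1.trans hb2.symm) hne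
            constructor
            · have h3 : Fin.snoc (Fin.init s₁) true = s₁ := by
                rw [← hb1]; exact Fin.snoc_init_self s₁
              rw [h3]; exact hs₁
            · rw [hfe]
              have h3 : Fin.snoc (Fin.init s₂) false = s₂ := by
                rw [← hb2]; exact Fin.snoc_init_self s₂
              rw [h3]; exact hs₂
          · have hb2 : s₂ (Fin.last n) = true := by
              cases hb2 : s₂ (Fin.last n) with
              | true => rfl
              | false => exact absurd (hb1.trans hb2.symm) hne
            constructor
            · rw [hfe]
              have h3 : Fin.snoc (Fin.init s₂) true = s₂ := by
                rw [← hb2]; exact Fin.snoc_init_self s₂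
              rw [h3]; exact hs₂
            · have h3 : Fin.snoc (Fin.init s₁) false = s₁ := by
                rw [← hb1]; exact Fin.snoc_init_self s₁
              rw [h3]; exact hs₁
        rcases Bool.eq_false_or_eq_true (s₁ (Fin.last n)) with hb1 | hb1
        · exact h1 ⟨hboth, hb1⟩
        · have hb2 : s₂ (Fin.last n) = true := by
            cases hb2 : s₂ (Fin.last n) with
            | true => rfl
            | false => exact absurd (hb1.trans hb2.symm) hne
          exact h2 ⟨by rw [← hfe]; exact hboth, hb2⟩
    -- step 2 : |S'| ≤ ∑_{i ≤ d} C(n,i)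
    have hstep2 : Nat.card S' ≤ ∑ i ∈ range (d + 1), n.choose i := ih E a' b'
    -- step 3 : |T| ≤ ∑_{i ≤ d-1} C(n,i)
    have hstep3 : Nat.card T ≤ ∑ i ∈ range d, n.choose i := by
      by_cases hA : aL = 0
      · -- degenerate : T is empty
        have : IsEmpty T := by
          refine ⟨?_⟩
          rintro ⟨t, ⟨x, hx⟩, ⟨y, hy⟩⟩
          have h1 := hx (Fin.last n)
          have h2 := hy (Fin.last n)
          simp only [Fin.snoc_last] at h1 h2
          norm_num at h1 h2
          have hA' : a (Fin.last n) = 0 := by rw [← haL]; exact hA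
          rw [hA', inner_zero_left] at h1 h2
          linarith
        simp [Nat.card_of_isEmpty]
      · -- main case : use the restriction to the hyperplane ⟪aL, x⟫ = bL
        have hEnt : Nontrivial E := nontrivial_of_ne aL 0 hA
        have hd1 : 1 ≤ d := hd ▸ Module.finrank_pos
        set W := (ℝ ∙ aL)ᗮ with hW
        have hWrank : finrank ℝ W = d - 1 := by
          have h1 : finrank ℝ (ℝ ∙ aL) + finrank ℝ W = d :=
            Submodule.finrank_add_finrank_orthogonal _
          have h2 : finrank ℝ (ℝ ∙ aL) = 1 := finrank_span_singleton hA
          omega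
        set p : E := (bL / ⟪aL, aL⟫) • aL with hp
        have hap : ⟪aL, p⟫ = bL := by
          rw [hp, real_inner_smul_right, div_mul_cancel₀ _ (inner_self_ne_zero.mpr hA)]
        set aW : Fin n → W := fun j => Submodule.orthogonalProjectionOnto W (a' j) with haW
        set bW : Fin n → ℝ := fun j => b' j - ⟪a' j, p⟫ with hbW
        -- key inner-product computation
        have hinner : ∀ (j : Fin n) (w : W), ⟪aW j, w⟫ = ⟪a' j, (w : E)⟫ := by
          intro j w
          have horth : a' j - (Submodule.orthogonalProjectionOnto W (a' j) : E) ∈ Wᗮ :=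
            Submodule.sub_starProjection_mem_orthogonal (K := W) (a' j)
          have h0 : ⟪(w : E), a' j - (Submodule.orthogonalProjectionOnto W (a' j) : E)⟫ = 0 :=
            horth (w : E) w.2
          have h0' : ⟪a' j, (w : E)⟫
              - ⟪((Submodule.orthogonalProjectionOnto W (a' j) : W) : E), (w : E)⟫ = 0 := by
            rw [← inner_sub_left, real_inner_comm]
            exact h0
          rw [Submodule.coe_inner]
          have haWj : ((aW j : W) : E) = ((Submodule.orthogonalProjectionOnto W (a' j) : W) : E) := rfl
          rw [haWj]
          linarith
        -- each split cell gives a nonempty cell of the restricted arrangement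
        have hne' : ∀ t : Fin n → Bool, (bcell a b (Fin.snoc t true)).Nonempty →
            (bcell a b (Fin.snoc t false)).Nonempty → (bcell aW bW t).Nonempty := by
          rintro t ⟨x, hx⟩ ⟨y, hy⟩
          -- x is on the positive side of aL, y on the negative side
          have hxL : bL < ⟪aL, x⟫ := by
            have := hx (Fin.last n); simpa using this
          have hyL : ⟪aL, y⟫ < bL := by
            have := hy (Fin.last n); simpa using this
          have hx' : x ∈ bcell a' b' t := by
            have h := hrestr _ x hx
            have he : (fun j : Fin n => (Fin.snoc t true : Fin (n+1) → Bool) j.castSucc) = t := by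
              funext j; simp
            rwa [he] at h
          have hy' : y ∈ bcell a' b' t := by
            have h := hrestr _ y hy
            have he : (fun j : Fin n => (Fin.snoc t false : Fin (n+1) → Bool) j.castSucc) = t := by
              funext j; simp
            rwa [he] at h
          -- intermediate value : find z on the segment with ⟪aL, z⟫ = bL
          set g : ℝ → ℝ := fun θ => ⟪aL, x + θ • (y - x)⟫ with hg
          have hcont : ContinuousOn g (Set.Icc (0:ℝ) 1) :=
            (continuous_const.inner
              (continuous_const.add (continuous_id.smul continuous_const))).continuousOn
          have hg0 : g 0 = ⟪aL, x⟫ := by simp [hg]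
          have hg1 : g 1 = ⟪aL, y⟫ := by simp [hg]
          have hIV := intermediate_value_Icc' (zero_le_one) hcont
          have hbmem : bL ∈ Set.Icc (g 1) (g 0) := by
            rw [hg0, hg1]; exact ⟨le_of_lt hyL, le_of_lt hxL⟩
          obtain ⟨θ, hθ, hgθ⟩ := hIV hbmem
          set z : E := x + θ • (y - x) with hz
          have hzseg : z ∈ segment ℝ x y := by
            rw [segment_eq_image']; exact ⟨θ, hθ, rfl⟩
          have hz' : z ∈ bcell a' b' t :=
            (bcell_convex a' b' t).segment_subset hx' hy' hzseg
          have hzL : ⟪aL, z⟫ = bL := hgθ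
          -- z - p lies in W
          have hwW : z - p ∈ W := by
            rw [hW, Submodule.mem_orthogonal_singleton_iff_inner_right,
              inner_sub_right, hzL, hap, sub_self]
          refine ⟨⟨z - p, hwW⟩, ?_⟩
          intro j
          have hj := hz' j
          have hcalc : ⟪aW j, (⟨z - p, hwW⟩ : W)⟫ = ⟪a' j, z⟫ - ⟪a' j, p⟫ := by
            rw [hinner j ⟨z - p, hwW⟩]
            simp [inner_sub_right]
          cases ht : t j with
          | true =>
            rw [ht] at hj
            simp only [if_true] at hj ⊢
            rw [hcalc, hbW]
            simp only
            linarith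
          | false =>
            rw [ht] at hj
            simp only [if_false, Bool.false_eq_true] at hj ⊢
            rw [hcalc, hbW]
            simp only
            linarith
        -- injection T ↪ nonempty cells of the restricted arrangement on W
        have hinj : Nat.card T ≤ Nat.card {t : Fin n → Bool // (bcell aW bW t).Nonempty} := by
          refine Nat.card_le_card_of_injective
            (fun t => ⟨t.1, hne' t.1 t.2.1 t.2.2⟩) ?_
          rintro ⟨t₁, ht₁⟩ ⟨t₂, ht₂⟩ hgf
          have h : t₁ = t₂ := by
            have := congrArg Subtype.val hgf
            simpa using this
          exact Subtype.ext h
        have hrest := ih W aW bW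
        rw [hWrank] at hrest
        have : d - 1 + 1 = d := by omega
        rw [this] at hrest
        exact hinj.trans hrest
    calc Nat.card {s : Fin (n + 1) → Bool // (bcell a b s).Nonempty}
        ≤ Nat.card S' + Nat.card T := hstep1
      _ ≤ ∑ i ∈ range (d + 1), n.choose i + ∑ i ∈ range d, n.choose i :=
          Nat.add_le_add hstep2 hstep3
      _ = ∑ i ∈ range (d + 1), (n + 1).choose i := (pascal_sum n d).symm

end BuckAux

/-- Buck's upper bound: the complement of a union of `n` affine hyperplanes in `ℝ^d`
has finitely many connected components, and at most `∑_{i=0}^{d} C(n,i)` of them. -/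
theorem buck_chamber_upper_bound (d n : ℕ)
    (a : Fin n → EuclideanSpace ℝ (Fin d)) (b : Fin n → ℝ)
    (ha : ∀ i, a i ≠ 0) :
    Finite (ConnectedComponents
      ((⋃ i : Fin n, {x : EuclideanSpace ℝ (Fin d) | ⟪a i, x⟫ = b i})ᶜ :
        Set (EuclideanSpace ℝ (Fin d)))) ∧
    Nat.card (ConnectedComponents
      ((⋃ i : Fin n, {x : EuclideanSpace ℝ (Fin d) | ⟪a i, x⟫ = b i})ᶜ :
        Set (EuclideanSpace ℝ (Fin d)))) ≤
      ∑ i ∈ Finset.range (d + 1), n.choose i := by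
  classical
  let E := EuclideanSpace ℝ (Fin d)
  set U : Set (EuclideanSpace ℝ (Fin d)) :=
    (⋃ i : Fin n, {x : EuclideanSpace ℝ (Fin d) | ⟪a i, x⟫ = b i})ᶜ with hU
  have hmemU : ∀ x : E, x ∈ U ↔ ∀ i, ⟪a i, x⟫ ≠ b i := by
    intro x; simp [hU]; exact Iff.rfl
  -- every cell is contained in U
  have hcellsub : ∀ s, bcell a b s ⊆ U := by
    intro s x hx
    rw [hmemU]
    intro i
    have h := hx i
    cases hs : s i with
    | true => rw [hs] at h; simp only [if_true] at h; exact ne_of_gt h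
    | false => rw [hs] at h; simp only [if_false, Bool.false_eq_true] at h; exact ne_of_lt h
  -- the sign map
  set σ : U → (Fin n → Bool) := fun x i => decide (b i < ⟪a i, (x : E)⟫) with hσ
  have hmem : ∀ x : U, (x : E) ∈ bcell a b (σ x) := by
    intro x i
    show if decide (b i < ⟪a i, (x : E)⟫) = true then b i < ⟪a i, (x : E)⟫
      else ⟪a i, (x : E)⟫ < b i
    by_cases h : b i < ⟪a i, (x : E)⟫
    · rw [if_pos (decide_eq_true h)]
      exact h
    · have hne : ⟪a i, (x : E)⟫ ≠ b i := (hmemU _).mp x.2 i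
      have hlt : ⟪a i, (x : E)⟫ < b i := lt_of_le_of_ne (not_lt.mp h) hne
      rw [if_neg (fun hc => h (of_decide_eq_true hc))]
      exact hlt
  have hσeq : ∀ (x : U) (s : Fin n → Bool), (x : E) ∈ bcell a b s → σ x = s := by
    intro x s hx
    funext i
    have h := hx i
    show decide (b i < ⟪a i, (x : E)⟫) = s i
    cases hs : s i with
    | true =>
      rw [hs] at h; simp only [if_true] at h; exact decide_eq_true h
    | false =>
      rw [hs] at h; simp only [if_false, Bool.false_eq_true] at h
      exact decide_eq_false (not_lt_of_gt h)
  -- σ is locally constant, hence continuous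
  have hfiber : ∀ s, σ ⁻¹' {s} = Subtype.val ⁻¹' bcell a b s := by
    intro s
    ext x
    simp only [Set.mem_preimage, Set.mem_singleton_iff]
    constructor
    · rintro rfl; exact hmem x
    · exact hσeq x s
  have hlc : IsLocallyConstant σ := by
    intro A
    have : σ ⁻¹' A = ⋃ s ∈ A, σ ⁻¹' {s} := by
      ext x; simp
    rw [this]
    exact isOpen_biUnion fun s _ =>
      (hfiber s) ▸ (bcell_open a b s).preimage continuous_subtype_val
  have hcont : Continuous σ := hlc.continuous
  -- lift to connected components
  set φ : ConnectedComponents U → (Fin n → Bool) := hcont.connectedComponentsLift with hφ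
  have hφcoe : ∀ x : U, φ (x : ConnectedComponents U) = σ x := fun x =>
    hcont.connectedComponentsLift_apply_coe x
  have hnecell : ∀ c : ConnectedComponents U, (bcell a b (φ c)).Nonempty := by
    intro c
    obtain ⟨x, rfl⟩ := ConnectedComponents.surjective_coe c
    rw [hφcoe x]
    exact ⟨x, hmem x⟩
  set f : ConnectedComponents U → {s : Fin n → Bool // (bcell a b s).Nonempty} :=
    fun c => ⟨φ c, hnecell c⟩ with hfdef
  have hfinj : Function.Injective f := by
    intro c₁ c₂ hf
    obtain ⟨x, rfl⟩ := ConnectedComponents.surjective_coe c₁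
    obtain ⟨y, rfl⟩ := ConnectedComponents.surjective_coe c₂
    have hσxy : σ x = σ y := by
      have := congrArg Subtype.val hf
      simpa [hfdef, hφcoe] using this
    -- x and y lie in the same (preconnected) cell
    set s := σ x with hs
    have hxV : x ∈ (Subtype.val ⁻¹' bcell a b s : Set U) := hmem x
    have hyV : y ∈ (Subtype.val ⁻¹' bcell a b s : Set U) := by
      have : (y : E) ∈ bcell a b (σ y) := hmem y
      rwa [← hσxy] at this
    have hpc : IsPreconnected (Subtype.val ⁻¹' bcell a b s : Set U) := by
      have hind : Topology.IsInducing (Subtype.val : U → E) := Topology.IsInducing.subtypeVal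
      rw [← hind.isPreconnected_image]
      have himg : Subtype.val '' (Subtype.val ⁻¹' bcell a b s : Set U) = bcell a b s := by
        rw [Subtype.image_preimage_coe]
        exact Set.inter_eq_self_of_subset_right (hcellsub s)
      rw [himg]
      exact (bcell_convex a b s).isPreconnected
    have hycc : y ∈ connectedComponent x :=
      hpc.subset_connectedComponent hxV hyV
    exact (ConnectedComponents.coe_eq_coe'.mpr hycc).symm
  have hfin : Finite (ConnectedComponents U) := Finite.of_injective f hfinj
  refine ⟨hfin, ?_⟩
  have hcard : Nat.card (ConnectedComponents U)
      ≤ Nat.card {s : Fin n → Bool // (bcell a b s).Nonempty} :=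
    Nat.card_le_card_of_injective f hfinj
  have hmain := buck_main n E a b
  have hrank : Module.finrank ℝ E = d := finrank_euclideanSpace_fin
  rw [hrank] at hmain
  exact hcard.trans hmain
end

section
/- Buck's exact chamber count in general position: let H₁, …, Hₙ be n affine hyperplanes in ℝ^d, where H_i = {x | ⟪a_i, x⟫ = b_i} with a_i ≠ 0, in general position, meaning: for every index set S of size at most d, the vectors (a_i)_{i ∈ S} are linearly independent and the intersection ⋂_{i ∈ S} H_i is nonempty, and for every index set S of size d + 1 the intersection ⋂_{i ∈ S} H_i is empty. Then the number of connected components of the complement ℝ^d \ (H₁ ∪ ⋯ ∪ Hₙ) is exactly ∑_{i=0}^{d} C(n, i). -/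
open scoped RealInnerProductSpace
open Finset Module Submodule

namespace BuckAux




variable {E : Type} [NormedAddCommGroup E] [InnerProductSpace ℝ E]

/-- The open region with sign pattern `σ`. -/
def region {n : ℕ} (a : Fin n → E) (b : Fin n → ℝ) (σ : Fin n → Bool) : Set E :=
  {x | ∀ i, if σ i then b i < ⟪a i, x⟫ else ⟪a i, x⟫ < b i}

theorem region_convex {n : ℕ} (a : Fin n → E) (b : Fin n → ℝ) (σ : Fin n → Bool) :
    Convex ℝ (region a b σ) := by
  have : region a b σ = ⋂ i, {x : E | if σ i then b i < ⟪a i, x⟫ else ⟪a i, x⟫ < b i} := by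
    ext x; simp [region, Set.mem_iInter]
  rw [this]
  refine convex_iInter fun i => ?_
  have hlin : IsLinearMap ℝ (fun x : E => ⟪a i, x⟫) :=
    ⟨fun x y => inner_add_right _ _ _, fun c x => real_inner_smul_right _ _ _⟩
  by_cases h : σ i <;> simp only [h, if_true, if_false]
  · exact convex_halfSpace_gt hlin _
  · exact convex_halfSpace_lt hlin _

theorem region_open {n : ℕ} (a : Fin n → E) (b : Fin n → ℝ) (σ : Fin n → Bool) :
    IsOpen (region a b σ) := by
  have : region a b σ = ⋂ i, {x : E | if σ i then b i < ⟪a i, x⟫ else ⟪a i, x⟫ < b i} := by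
    ext x; simp [region, Set.mem_iInter]
  rw [this]
  refine isOpen_iInter_of_finite fun i => ?_
  have hc : Continuous (fun x : E => ⟪a i, x⟫) := Continuous.inner continuous_const continuous_id
  by_cases h : σ i <;> simp only [h, if_true, if_false]
  · exact isOpen_lt continuous_const hc
  · exact isOpen_lt hc continuous_const

theorem region_eq_of_mem {n : ℕ} {a : Fin n → E} {b : Fin n → ℝ} {σ τ : Fin n → Bool} {x : E}
    (hσ : x ∈ region a b σ) (hτ : x ∈ region a b τ) : σ = τ := by
  funext i
  have h1 := hσ i; have h2 := hτ i
  by_cases hs : σ i <;> by_cases ht : τ i <;> simp_all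
  · exact absurd (h1.trans h2) (lt_irrefl _)
  · exact absurd (h2.trans h1) (lt_irrefl _)

variable {E : Type} [NormedAddCommGroup E] [InnerProductSpace ℝ E]



theorem mem_region_snoc {n : ℕ} {a : Fin (n + 1) → E} {b : Fin (n + 1) → ℝ}
    {σ' : Fin n → Bool} {s : Bool} {x : E} :
    x ∈ region a b (Fin.snoc σ' s) ↔
      x ∈ region (fun i => a i.castSucc) (fun i => b i.castSucc) σ' ∧
      (if s then b (Fin.last n) < ⟪a (Fin.last n), x⟫ else ⟪a (Fin.last n), x⟫ < b (Fin.last n)) := by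
  constructor
  · intro h
    refine ⟨fun i => ?_, ?_⟩
    · have := h i.castSucc; rwa [Fin.snoc_castSucc] at this
    · have := h (Fin.last n); rwa [Fin.snoc_last] at this
  · rintro ⟨h1, h2⟩ i
    induction i using Fin.lastCases with
    | last => rwa [Fin.snoc_last]
    | cast j => rw [Fin.snoc_castSucc]; exact h1 j

theorem snoc_comp_castSucc {n : ℕ} (σ : Fin (n + 1) → Bool) :
    Fin.snoc (fun i => σ i.castSucc) (σ (Fin.last n)) = σ := by
  funext i
  induction i using Fin.lastCases with
  | last => rw [Fin.snoc_last]
  | cast j => rw [Fin.snoc_castSucc]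

variable {E : Type} [NormedAddCommGroup E] [InnerProductSpace ℝ E]

theorem exists_both {s : Set E} (ho : IsOpen s) {x : E} (hx : x ∈ s) {al : E} (ha : al ≠ 0)
    {bl : ℝ} (hb : ⟪al, x⟫ = bl) :
    (∃ y ∈ s, bl < ⟪al, y⟫) ∧ (∃ y ∈ s, ⟪al, y⟫ < bl) := by
  obtain ⟨ε, hε, hball⟩ := Metric.isOpen_iff.mp ho x hx
  have hna : ‖al‖ > 0 := norm_pos_iff.mpr ha
  set t : ℝ := ε / (2 * ‖al‖) with ht
  have htpos : 0 < t := div_pos hε (by positivity)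
  have hinner : 0 < ⟪al, al⟫ := by rw [real_inner_self_eq_norm_sq]; positivity
  have hmem : ∀ c : ℝ, |c| = t → x + c • al ∈ s := by
    intro c hc
    apply hball
    rw [Metric.mem_ball, dist_eq_norm]
    have : x + c • al - x = c • al := by abel
    rw [this, norm_smul, Real.norm_eq_abs, hc]
    rw [ht]
    rw [div_mul_eq_mul_div, mul_comm 2 ‖al‖, ← div_div]
    rw [mul_div_assoc, div_self (ne_of_gt hna), mul_one]
    linarith
  constructor
  · refine ⟨x + t • al, hmem t (abs_of_pos htpos), ?_⟩
    rw [inner_add_right, hb, real_inner_smul_right]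
    nlinarith
  · refine ⟨x + (-t) • al, hmem (-t) (by rw [abs_neg, abs_of_pos htpos]), ?_⟩
    rw [inner_add_right, hb, real_inner_smul_right]
    nlinarith

theorem exists_inner_ne {s : Set E} (ho : IsOpen s) {x : E} (hx : x ∈ s) {al : E} (ha : al ≠ 0)
    (bl : ℝ) : ∃ y ∈ s, ⟪al, y⟫ ≠ bl := by
  by_cases h : ⟪al, x⟫ = bl
  · obtain ⟨⟨y, hy, hlt⟩, -⟩ := exists_both ho hx ha h
    exact ⟨y, hy, ne_of_gt hlt⟩
  · exact ⟨x, hx, h⟩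

theorem exists_touch {s : Set E} (hc : Convex ℝ s) {x y : E} (hx : x ∈ s) (hy : y ∈ s)
    {al : E} {bl : ℝ} (h1 : ⟪al, x⟫ < bl) (h2 : bl < ⟪al, y⟫) :
    ∃ z ∈ s, ⟪al, z⟫ = bl := by
  set f : ℝ → ℝ := fun t => ⟪al, x + t • (y - x)⟫ with hf
  have hcont : Continuous f := by
    apply Continuous.inner continuous_const
    exact continuous_const.add (continuous_id.smul continuous_const)
  have hf0 : f 0 = ⟪al, x⟫ := by simp [hf]
  have hf1 : f 1 = ⟪al, y⟫ := by simp [hf]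
  have hsub : Set.Icc (f 0) (f 1) ⊆ f '' Set.Icc (0:ℝ) 1 :=
    intermediate_value_Icc zero_le_one hcont.continuousOn
  have hbl : bl ∈ Set.Icc (f 0) (f 1) := ⟨by rw [hf0]; linarith, by rw [hf1]; linarith⟩
  obtain ⟨t, ⟨ht0, ht1⟩, htf⟩ := hsub hbl
  refine ⟨x + t • (y - x), ?_, htf⟩
  have hmem := hc hx hy (by linarith : (0:ℝ) ≤ 1 - t) ht0 (by ring)
  have heq : (1 - t) • x + t • y = x + t • (y - x) := by module
  rwa [heq] at hmem


theorem sum_choose_zero (d : ℕ) : ∑ i ∈ Finset.range (d + 1), Nat.choose 0 i = 1 := by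
  induction d with
  | zero => simp
  | succ k ih => rw [Finset.sum_range_succ, ih, Nat.choose_eq_zero_of_lt (Nat.succ_pos k)]

theorem sum_choose_pascal (n k : ℕ) :
    ∑ i ∈ Finset.range (k + 2), (n + 1).choose i =
      ∑ i ∈ Finset.range (k + 2), n.choose i + ∑ i ∈ Finset.range (k + 1), n.choose i := by
  induction k with
  | zero => simp [Finset.sum_range_succ, Nat.choose]; ring
  | succ m ih =>
    rw [Finset.sum_range_succ, ih, Finset.sum_range_succ (n := m + 2),
      Finset.sum_range_succ (n := m + 1), Nat.choose_succ_succ' n (m + 1)]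
    ring

set_option maxHeartbeats 2000000 in
theorem key : ∀ (n : ℕ) (E : Type) [NormedAddCommGroup E] [InnerProductSpace ℝ E]
    [FiniteDimensional ℝ E] (d : ℕ), finrank ℝ E = d →
    ∀ (a : Fin n → E) (b : Fin n → ℝ),
    (∀ S : Finset (Fin n), S.card ≤ d →
      LinearIndependent ℝ (fun i : S => a i) ∧
      (⋂ i ∈ S, {x : E | ⟪a i, x⟫ = b i}).Nonempty) →
    (∀ S : Finset (Fin n), S.card = d + 1 →
      (⋂ i ∈ S, {x : E | ⟪a i, x⟫ = b i}) = ∅) →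
    Nat.card {σ : Fin n → Bool | (region a b σ).Nonempty}
      = ∑ i ∈ Finset.range (d + 1), n.choose i := by
  intro n
  induction n with
  | zero =>
    intro E _ _ _ d hd a b hgen₁ hgen₂
    have h1 : {σ : Fin 0 → Bool | (region a b σ).Nonempty} = Set.univ := by
      ext σ
      simp only [Set.mem_setOf_eq, Set.mem_univ, iff_true]
      exact ⟨0, fun i => i.elim0⟩
    rw [h1, sum_choose_zero]
    simp [Nat.card_eq_fintype_card]
  | succ n IH =>
    intro E _ _ _ d hd a b hgen₁ hgen₂
    match d with
    | 0 =>
      haveI hsub : Subsingleton E := Module.finrank_zero_iff.mp hd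
      have hbne : ∀ i, b i ≠ 0 := by
        intro i hb
        have h := hgen₂ {i} (by simp)
        have h0 : (0 : E) ∈ ⋂ j ∈ ({i} : Finset (Fin (n + 1))), {x : E | ⟪a j, x⟫ = b j} := by
          simp only [Set.mem_iInter, Finset.mem_singleton]
          rintro j rfl
          simp [hb]
        rw [h] at h0
        exact h0
      have hset : {σ : Fin (n + 1) → Bool | (region a b σ).Nonempty}
          = {fun i => decide (b i < 0)} := by
        ext σ
        simp only [Set.mem_setOf_eq, Set.mem_singleton_iff]
        constructor
        · rintro ⟨x, hx⟩
          have hx0 : x = 0 := Subsingleton.elim _ _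
          subst hx0
          funext i
          have hi := hx i
          by_cases hs : σ i
          · simp only [hs, if_true, inner_zero_right] at hi
            simp [hs, hi]
          · simp only [hs, if_false, inner_zero_right] at hi
            simp only [Bool.not_eq_true] at hs
            rw [hs]
            symm
            simpa using not_lt.mpr (le_of_lt hi)
        · rintro rfl
          refine ⟨0, fun i => ?_⟩
          rcases (hbne i).lt_or_gt with h | h
          · simp [h]
          · simp [h, not_lt.mpr (le_of_lt h)]
      rw [hset]
      simp [Nat.card_unique]
    | (k + 1) =>
      -- setup
      have hsing : ({Fin.last n} : Finset (Fin (n + 1))).card ≤ k + 1 := by simp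
      have hal : a (Fin.last n) ≠ 0 :=
        (hgen₁ {Fin.last n} hsing).1.ne_zero ⟨Fin.last n, Finset.mem_singleton_self _⟩
      obtain ⟨x0, hx0mem⟩ := (hgen₁ {Fin.last n} hsing).2
      have hx0 : ⟪a (Fin.last n), x0⟫ = b (Fin.last n) := by
        simpa using hx0mem
      set W : Submodule ℝ E := (ℝ ∙ a (Fin.last n))ᗮ with hWdef
      have hWrank : finrank ℝ W = k := by
        have h1 : finrank ℝ (ℝ ∙ a (Fin.last n)) = 1 := finrank_span_singleton hal
        have h2 := Submodule.finrank_add_finrank_orthogonal (K := (ℝ ∙ a (Fin.last n)))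
        rw [h1, hd] at h2
        rw [hWdef]
        omega
      set a' : Fin n → E := fun i => a i.castSucc with ha'
      set b' : Fin n → ℝ := fun i => b i.castSucc with hb'
      set a'' : Fin n → W := fun i => orthogonalProjection W (a' i) with ha''
      set b'' : Fin n → ℝ := fun i => b' i - ⟪a' i, x0⟫ with hb''
      -- basic inner product identities
      have hyW : ∀ y : W, ⟪a (Fin.last n), (y : E)⟫ = 0 := by
        intro y
        have hy : (y : E) ∈ (ℝ ∙ a (Fin.last n))ᗮ := y.2
        rw [Submodule.mem_orthogonal] at hy
        exact hy _ (Submodule.mem_span_singleton_self _)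
      have hinner : ∀ (c : E) (y : W), ⟪(orthogonalProjection W c : W), y⟫ = ⟪c, (y : E)⟫ := by
        intro c y
        rw [Submodule.coe_inner]
        have hz : ⟪c - (orthogonalProjection W c : E), (y : E)⟫ = 0 := by
          have hm : c - (orthogonalProjection W c : E) ∈ Wᗮ := Submodule.sub_starProjection_mem_orthogonal (K := W) c
          rw [Submodule.mem_orthogonal] at hm
          rw [real_inner_comm]
          exact hm _ y.2
        have : ⟪c, (y : E)⟫ = ⟪(orthogonalProjection W c : E), (y : E)⟫
            + ⟪c - (orthogonalProjection W c : E), (y : E)⟫ := by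
          rw [← inner_add_left]
          congr 1
          abel
        rw [this, hz, add_zero]
      have hcond : ∀ (i : Fin n) (y : W), ⟪a'' i, y⟫ - b'' i = ⟪a' i, (y : E) + x0⟫ - b' i := by
        intro i y
        rw [ha'', hinner, hb'', inner_add_right]
        ring
      have hmemW : ∀ z : E, ⟪a (Fin.last n), z⟫ = b (Fin.last n) → z - x0 ∈ W := by
        intro z hz
        rw [hWdef, Submodule.mem_orthogonal]
        intro u hu
        rw [Submodule.mem_span_singleton] at hu
        obtain ⟨c, rfl⟩ := hu
        rw [real_inner_smul_left, inner_sub_right, hz, hx0]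
        ring
      -- region correspondence between W and the affine hyperplane
      have hregionW : ∀ (σ' : Fin n → Bool) (y : W),
          y ∈ region a'' b'' σ' ↔ (y : E) + x0 ∈ region a' b' σ' := by
        intro σ' y
        simp only [region, Set.mem_setOf_eq]
        apply forall_congr'
        intro i
        have hq := hcond i y
        by_cases hs : σ' i
        · rw [if_pos hs, if_pos hs]
          constructor <;> intro h <;> linarith
        · rw [if_neg hs, if_neg hs]
          constructor <;> intro h <;> linarith
      -- transfer of hypotheses to the deleted arrangement
      have hgen₁' : ∀ S : Finset (Fin n), S.card ≤ k + 1 →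
          LinearIndependent ℝ (fun i : S => a' i) ∧
          (⋂ i ∈ S, {x : E | ⟪a' i, x⟫ = b' i}).Nonempty := by
        intro S hS
        obtain ⟨h1, h2⟩ := hgen₁ (S.image Fin.castSucc)
          (by rwa [Finset.card_image_of_injective _ (Fin.castSucc_injective n)])
        constructor
        · have := h1.comp (fun i : S => (⟨Fin.castSucc i.1, Finset.mem_image_of_mem _ i.2⟩ :
              (S.image Fin.castSucc : Finset (Fin (n+1)))))
            (fun i j hij => Subtype.ext (Fin.castSucc_injective n
              (congrArg Subtype.val hij)))
          simpa [Function.comp_def, ha'] using this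
        · obtain ⟨x, hx⟩ := h2
          simp only [Set.mem_iInter] at hx
          refine ⟨x, ?_⟩
          simp only [Set.mem_iInter]
          intro i hi
          exact hx (Fin.castSucc i) (Finset.mem_image_of_mem _ hi)
      have hgen₂' : ∀ S : Finset (Fin n), S.card = (k + 1) + 1 →
          (⋂ i ∈ S, {x : E | ⟪a' i, x⟫ = b' i}) = ∅ := by
        intro S hS
        have h := hgen₂ (S.image Fin.castSucc)
          (by rwa [Finset.card_image_of_injective _ (Fin.castSucc_injective n)])
        rw [Set.eq_empty_iff_forall_notMem]
        intro x hx
        simp only [Set.mem_iInter] at hx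
        rw [Set.eq_empty_iff_forall_notMem] at h
        apply h x
        simp only [Set.mem_iInter]
        intro j hj
        obtain ⟨i, hi, rfl⟩ := Finset.mem_image.mp hj
        exact hx i hi
      -- the augmented index set
      have hlastnot : ∀ S : Finset (Fin n), Fin.last n ∉ S.image Fin.castSucc := by
        intro S h
        obtain ⟨i, -, hi⟩ := Finset.mem_image.mp h
        exact (ne_of_lt (Fin.castSucc_lt_last i)) hi
      have hcardhat : ∀ S : Finset (Fin n),
          (insert (Fin.last n) (S.image Fin.castSucc)).card = S.card + 1 := by
        intro S
        rw [Finset.card_insert_of_notMem (hlastnot S),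
          Finset.card_image_of_injective _ (Fin.castSucc_injective n)]
      -- transfer of hypotheses to the restricted arrangement
      have hgen₁'' : ∀ S : Finset (Fin n), S.card ≤ k →
          LinearIndependent ℝ (fun i : S => a'' i) ∧
          (⋂ i ∈ S, {y : W | ⟪a'' i, y⟫ = b'' i}).Nonempty := by
        intro S hS
        obtain ⟨h1, h2⟩ := hgen₁ (insert (Fin.last n) (S.image Fin.castSucc))
          (by rw [hcardhat S]; omega)
        have hmemhat : ∀ i : S, Fin.castSucc i.1 ∈ insert (Fin.last n) (S.image Fin.castSucc) :=
          fun i => Finset.mem_insert_of_mem (Finset.mem_image_of_mem _ i.2)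
        constructor
        · have hlin' : LinearIndependent ℝ (fun i : S => a' (i : Fin n)) := by
            have := h1.comp (fun i : S => (⟨Fin.castSucc i.1, hmemhat i⟩ :
                (insert (Fin.last n) (S.image Fin.castSucc) : Finset (Fin (n+1)))))
              (fun i j hij => Subtype.ext (Fin.castSucc_injective n
                (congrArg Subtype.val hij)))
            simpa [Function.comp_def, ha'] using this
          have hnspan : a (Fin.last n) ∉ span ℝ (Set.range fun i : S => a' (i : Fin n)) := by
            have hnm := h1.notMem_span_image
              (s := {j : (insert (Fin.last n) (S.image Fin.castSucc) : Finset (Fin (n+1))) |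
                (j : Fin (n + 1)) ≠ Fin.last n})
              (x := ⟨Fin.last n, Finset.mem_insert_self _ _⟩) (by simp)
            intro hmem
            apply hnm
            refine span_le.mpr ?_ hmem
            rintro _ ⟨i, rfl⟩
            apply Submodule.subset_span
            exact ⟨⟨Fin.castSucc i.1, hmemhat i⟩,
              by simp [ne_of_lt (Fin.castSucc_lt_last i.1)], rfl⟩
          have hker : LinearMap.ker ((orthogonalProjection W).toLinearMap)
              = ℝ ∙ a (Fin.last n) := by
            ext x
            rw [LinearMap.mem_ker]
            have : (orthogonalProjection W).toLinearMap x = orthogonalProjection W x := rfl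
            rw [this, Submodule.orthogonalProjectionOnto_eq_zero_iff]
            rw [hWdef, Submodule.orthogonal_orthogonal]
          have hdisj : Disjoint (span ℝ (Set.range fun i : S => a' (i : Fin n)))
              (LinearMap.ker ((orthogonalProjection W).toLinearMap)) := by
            rw [hker, Submodule.disjoint_def]
            intro v hv hv2
            rw [Submodule.mem_span_singleton] at hv2
            obtain ⟨c, rfl⟩ := hv2
            by_cases hc : c = 0
            · simp [hc]
            · exfalso
              apply hnspan
              have := Submodule.smul_mem _ c⁻¹ hv
              rwa [inv_smul_smul₀ hc] at this
          have := hlin'.map hdisj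
          simpa [Function.comp_def, ha''] using this
        · obtain ⟨x, hx⟩ := h2
          simp only [Set.mem_iInter] at hx
          have hxl : ⟪a (Fin.last n), x⟫ = b (Fin.last n) :=
            hx _ (Finset.mem_insert_self _ _)
          refine ⟨⟨x - x0, hmemW x hxl⟩, ?_⟩
          simp only [Set.mem_iInter]
          intro i hi
          show ⟪a'' i, _⟫ = b'' i
          rw [ha'', hinner, hb'']
          have : ⟪a' i, x - x0⟫ = ⟪a' i, x⟫ - ⟪a' i, x0⟫ := by
            rw [inner_sub_right]
          rw [this]
          have hxi : ⟪a' i, x⟫ = b' i := hx _ (hmemhat ⟨i, hi⟩)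
          rw [hxi]
      have hgen₂'' : ∀ S : Finset (Fin n), S.card = k + 1 →
          (⋂ i ∈ S, {y : W | ⟪a'' i, y⟫ = b'' i}) = ∅ := by
        intro S hS
        have h := hgen₂ (insert (Fin.last n) (S.image Fin.castSucc))
          (by rw [hcardhat S, hS])
        rw [Set.eq_empty_iff_forall_notMem]
        intro y hy
        simp only [Set.mem_iInter] at hy
        rw [Set.eq_empty_iff_forall_notMem] at h
        apply h ((y : E) + x0)
        simp only [Set.mem_iInter]
        intro j hj
        rcases Finset.mem_insert.mp hj with rfl | hj'
        · show ⟪a (Fin.last n), (y : E) + x0⟫ = b (Fin.last n)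
          rw [inner_add_right, hyW y, zero_add, hx0]
        · obtain ⟨i, hi, rfl⟩ := Finset.mem_image.mp hj'
          show ⟪a' i, (y : E) + x0⟫ = b' i
          have hyi : ⟪a'' i, y⟫ = b'' i := hy i hi
          have := hcond i y
          rw [hyi] at this
          linarith
      -- the two induction hypotheses
      have hd' := IH E (k + 1) hd a' b' hgen₁' hgen₂'
      have hd'' := IH W k hWrank a'' b'' hgen₁'' hgen₂''
      set G : Set (Fin (n + 1) → Bool) := {σ | (region a b σ).Nonempty} with hG
      set G' : Set (Fin n → Bool) := {σ' | (region a' b' σ').Nonempty} with hG'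
      set G'' : Set (Fin n → Bool) := {σ' | (region a'' b'' σ').Nonempty} with hG''
      set U : Set (Fin n → Bool) := {σ' | (region a b (Fin.snoc σ' true)).Nonempty} with hU
      set V : Set (Fin n → Bool) := {σ' | (region a b (Fin.snoc σ' false)).Nonempty} with hV
      have hsnoc : ∀ (σ' : Fin n → Bool) (s : Bool) (x : E),
          x ∈ region a b (Fin.snoc σ' s) ↔ x ∈ region a' b' σ' ∧
          (if s then b (Fin.last n) < ⟪a (Fin.last n), x⟫
            else ⟪a (Fin.last n), x⟫ < b (Fin.last n)) := fun σ' s x => mem_region_snoc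
      have hUV : U ∪ V = G' := by
        apply Set.Subset.antisymm
        · rintro σ' (⟨x, hx⟩ | ⟨x, hx⟩)
          · exact ⟨x, ((hsnoc σ' true x).mp hx).1⟩
          · exact ⟨x, ((hsnoc σ' false x).mp hx).1⟩
        · rintro σ' ⟨x, hx⟩
          obtain ⟨y, hy, hne⟩ := exists_inner_ne (region_open a' b' σ') hx hal (b (Fin.last n))
          rcases hne.lt_or_gt with h | h
          · right
            exact ⟨y, (hsnoc σ' false y).mpr ⟨hy, by simpa using h⟩⟩
          · left
            exact ⟨y, (hsnoc σ' true y).mpr ⟨hy, by simpa using h⟩⟩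
      have hUVinter : U ∩ V = G'' := by
        apply Set.Subset.antisymm
        · rintro σ' ⟨⟨xp, hxp⟩, ⟨xm, hxm⟩⟩
          obtain ⟨hp1, hp2⟩ := (hsnoc σ' true xp).mp hxp
          obtain ⟨hm1, hm2⟩ := (hsnoc σ' false xm).mp hxm
          have hp2' : b (Fin.last n) < ⟪a (Fin.last n), xp⟫ := by simpa using hp2
          have hm2' : ⟪a (Fin.last n), xm⟫ < b (Fin.last n) := by simpa using hm2
          obtain ⟨z, hz, hzl⟩ := exists_touch (region_convex a' b' σ') hm1 hp1 hm2' hp2'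
          refine ⟨⟨z - x0, hmemW z hzl⟩, ?_⟩
          refine (hregionW σ' ⟨z - x0, hmemW z hzl⟩).mpr ?_
          simpa [sub_add_cancel] using hz
        · rintro σ' ⟨y, hy⟩
          have hx := (hregionW σ' y).mp hy
          have hxl : ⟪a (Fin.last n), (y : E) + x0⟫ = b (Fin.last n) := by
            rw [inner_add_right, hyW y, zero_add, hx0]
          obtain ⟨⟨yp, hyp, hyp2⟩, ⟨ym, hym, hym2⟩⟩ :=
            exists_both (region_open a' b' σ') hx hal hxl
          constructor
          · exact ⟨yp, (hsnoc σ' true yp).mpr ⟨hyp, by simpa using hyp2⟩⟩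
          · exact ⟨ym, (hsnoc σ' false ym).mpr ⟨hym, by simpa using hym2⟩⟩
      have hGdecomp : G = (fun σ' : Fin n → Bool => (Fin.snoc σ' true : Fin (n + 1) → Bool)) '' U
          ∪ (fun σ' : Fin n → Bool => (Fin.snoc σ' false : Fin (n + 1) → Bool)) '' V := by
        apply Set.Subset.antisymm
        · rintro σ ⟨x, hx⟩
          have hσ := snoc_comp_castSucc σ
          cases hlast : σ (Fin.last n)
          · right
            refine ⟨fun i => σ i.castSucc, ⟨x, ?_⟩, ?_⟩
            · rw [hlast] at hσ
              rw [← hσ] at hx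
              exact hx
            · rw [hlast] at hσ
              exact hσ
          · left
            refine ⟨fun i => σ i.castSucc, ⟨x, ?_⟩, ?_⟩
            · rw [hlast] at hσ
              rw [← hσ] at hx
              exact hx
            · rw [hlast] at hσ
              exact hσ
        · rintro σ (⟨σ', hσ', rfl⟩ | ⟨σ', hσ', rfl⟩) <;> exact hσ'
      have hsnocinj : ∀ s : Bool, Function.Injective (fun σ' : Fin n → Bool => (Fin.snoc σ' s : Fin (n + 1) → Bool)) := by
        intro s σ₁ σ₂ h
        funext i
        have := congrFun h i.castSucc
        simpa [Fin.snoc_castSucc] using this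
      have hdisjimg : Disjoint ((fun σ' : Fin n → Bool => (Fin.snoc σ' true : Fin (n + 1) → Bool)) '' U)
          ((fun σ' : Fin n → Bool => (Fin.snoc σ' false : Fin (n + 1) → Bool)) '' V) := by
        rw [Set.disjoint_left]
        rintro σ ⟨σ₁, -, rfl⟩ ⟨σ₂, -, h⟩
        have := congrFun h (Fin.last n)
        simp [Fin.snoc_last] at this
      have hcount := Set.ncard_union_add_ncard_inter U V (Set.toFinite U) (Set.toFinite V)
      rw [hUV, hUVinter] at hcount
      have h1 : G'.ncard = ∑ i ∈ Finset.range (k + 2), n.choose i := by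
        rw [← Nat.card_coe_set_eq]; exact hd'
      have h2 : G''.ncard = ∑ i ∈ Finset.range (k + 1), n.choose i := by
        rw [← Nat.card_coe_set_eq]; exact hd''
      rw [Nat.card_coe_set_eq, hGdecomp,
        Set.ncard_union_eq hdisjimg (Set.toFinite _) (Set.toFinite _),
        Set.ncard_image_of_injective _ (hsnocinj true),
        Set.ncard_image_of_injective _ (hsnocinj false), ← hcount, h1, h2]
      exact (sum_choose_pascal n k).symm

theorem card_components {n : ℕ} (a : Fin n → E) (b : Fin n → ℝ) :
    Nat.card (ConnectedComponents ((⋃ i : Fin n, {x : E | ⟪a i, x⟫ = b i})ᶜ : Set E))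
      = Nat.card {σ : Fin n → Bool | (region a b σ).Nonempty} := by
  set X : Set E := (⋃ i : Fin n, {x : E | ⟪a i, x⟫ = b i})ᶜ with hX
  have hsubX : ∀ (σ : Fin n → Bool) (x : E), x ∈ region a b σ → x ∈ X := by
    intro σ x hx
    rw [hX, Set.mem_compl_iff, Set.mem_iUnion]
    rintro ⟨i, hi⟩
    have h := hx i
    by_cases hs : σ i
    · rw [if_pos hs] at h; rw [Set.mem_setOf_eq] at hi; linarith [h, hi.le]
    · rw [if_neg hs] at h; rw [Set.mem_setOf_eq] at hi; linarith [h, hi.ge]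
  have hmemreg : ∀ x : E, x ∈ X → x ∈ region a b (fun i => decide (b i < ⟪a i, x⟫)) := by
    intro x hx i
    rw [hX, Set.mem_compl_iff, Set.mem_iUnion] at hx
    have hne : ⟪a i, x⟫ ≠ b i := fun h => hx ⟨i, h⟩
    rcases hne.lt_or_gt with h | h
    · rw [if_neg]
      · exact h
      · simp only [decide_eq_true_eq]
        intro h2
        linarith
    · rw [if_pos]
      · exact h
      · simp only [decide_eq_true_eq]
        exact h
  have hpre : ∀ σ : Fin n → Bool, IsPreconnected ((Subtype.val : X → E) ⁻¹' region a b σ) := by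
    intro σ
    rw [← Topology.IsInducing.subtypeVal.isPreconnected_image (f := (Subtype.val : X → E))]
    have himg : Subtype.val '' ((Subtype.val : X → E) ⁻¹' region a b σ) = region a b σ := by
      rw [Subtype.image_preimage_coe]
      exact Set.inter_eq_self_of_subset_right (fun x hx => hsubX σ x hx)
    rw [himg]
    exact (region_convex a b σ).isPreconnected
  have hsame : ∀ (σ : Fin n → Bool) (p q : X), ↑p ∈ region a b σ → ↑q ∈ region a b σ →
      (ConnectedComponents.mk p = ConnectedComponents.mk q) := by
    intro σ p q hp hq
    have hsub := (hpre σ).subset_connectedComponent (show q ∈ _ from hq)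
    exact ConnectedComponents.coe_eq_coe'.mpr (hsub (show p ∈ _ from hp))
  set f : {σ : Fin n → Bool | (region a b σ).Nonempty} → ConnectedComponents X :=
    fun σh => ConnectedComponents.mk ⟨σh.2.choose, hsubX _ _ σh.2.choose_spec⟩ with hf
  have hinj : Function.Injective f := by
    intro σh τh heq
    ext i
    by_contra hneq
    have hστ : σh.1 ≠ τh.1 := fun h => hneq (congrFun h i)
    set p : X := ⟨σh.2.choose, hsubX _ _ σh.2.choose_spec⟩ with hp
    set q : X := ⟨τh.2.choose, hsubX _ _ τh.2.choose_spec⟩ with hq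
    have hpmem : (p : E) ∈ region a b σh.1 := σh.2.choose_spec
    have hqmem : (q : E) ∈ region a b τh.1 := τh.2.choose_spec
    have hqc : q ∈ connectedComponent p := by
      have := ConnectedComponents.coe_eq_coe.mp heq
      rw [this]
      exact mem_connectedComponent
    set u : Set X := (Subtype.val : X → E) ⁻¹' region a b σh.1 with hu
    set v : Set X := ⋃ τ' : {τ' : Fin n → Bool // τ' ≠ σh.1},
      (Subtype.val : X → E) ⁻¹' region a b τ'.1 with hv
    have hou : IsOpen u := (region_open a b σh.1).preimage continuous_subtype_val
    have hov : IsOpen v := isOpen_iUnion fun τ' =>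
      (region_open a b τ'.1).preimage continuous_subtype_val
    have hcover : connectedComponent p ⊆ u ∪ v := by
      intro z _
      have hz := hmemreg (z : E) z.2
      by_cases hcase : (fun i => decide (b i < ⟪a i, (z : E)⟫)) = σh.1
      · left
        rw [hu, Set.mem_preimage]
        rwa [hcase] at hz
      · right
        rw [hv, Set.mem_iUnion]
        exact ⟨⟨_, hcase⟩, hz⟩
    have h1 : (connectedComponent p ∩ u).Nonempty :=
      ⟨p, mem_connectedComponent, hpmem⟩
    have h2 : (connectedComponent p ∩ v).Nonempty := by
      refine ⟨q, hqc, ?_⟩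
      rw [hv, Set.mem_iUnion]
      exact ⟨⟨τh.1, fun h => hστ h.symm⟩, hqmem⟩
    obtain ⟨z, -, hzu, hzv⟩ :=
      isPreconnected_connectedComponent u v hou hov hcover h1 h2
    rw [hv, Set.mem_iUnion] at hzv
    obtain ⟨τ', hzτ⟩ := hzv
    exact τ'.2 (region_eq_of_mem hzτ hzu)
  have hsurj : Function.Surjective f := by
    intro c
    obtain ⟨x, hx⟩ := ConnectedComponents.surjective_coe c
    have hreg : (x : E) ∈ region a b (fun i => decide (b i < ⟪a i, (x : E)⟫)) :=
      hmemreg _ x.2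
    refine ⟨⟨_, ⟨(x : E), hreg⟩⟩, ?_⟩
    rw [hf]
    rw [← hx]
    exact hsame _ _ _ ((⟨(x : E), hreg⟩ : (region a b _).Nonempty).choose_spec) hreg
  exact (Nat.card_eq_of_bijective f ⟨hinj, hsurj⟩).symm

end BuckAux

/-- Buck's exact count: `n` affine hyperplanes in `ℝ^d` in general position (every at most
`d` of the defining normal vectors are linearly independent with the corresponding
hyperplanes having a common point, and no `d+1` of the hyperplanes meet) cut the
complement of their union into exactly `∑_{i=0}^{d} C(n,i)` connected components. -/
theorem buck_chamber_count_general_position (d n : ℕ)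
    (a : Fin n → EuclideanSpace ℝ (Fin d)) (b : Fin n → ℝ)
    (ha : ∀ i, a i ≠ 0)
    (hgen₁ : ∀ S : Finset (Fin n), S.card ≤ d →
      LinearIndependent ℝ (fun i : S => a i) ∧
      (⋂ i ∈ S, {x : EuclideanSpace ℝ (Fin d) | ⟪a i, x⟫ = b i}).Nonempty)
    (hgen₂ : ∀ S : Finset (Fin n), S.card = d + 1 →
      (⋂ i ∈ S, {x : EuclideanSpace ℝ (Fin d) | ⟪a i, x⟫ = b i}) = ∅) :
    Nat.card (ConnectedComponents
      ((⋃ i : Fin n, {x : EuclideanSpace ℝ (Fin d) | ⟪a i, x⟫ = b i})ᶜ :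
        Set (EuclideanSpace ℝ (Fin d)))) =
      ∑ i ∈ Finset.range (d + 1), n.choose i := by
  rw [BuckAux.card_components a b]
  exact BuckAux.key n (EuclideanSpace ℝ (Fin d)) d finrank_euclideanSpace_fin a b hgen₁ hgen₂
end
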